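/- arXiv:2009.12499 — 3 statements merged into one kernel-verified Lean document; each statement's English description precedes it below -/
import Mathlib

section
/- Suppose Ψ = (ψ₁,ψ₂,ψ₃,ψ₄) : [−T_*,T_*] → (ℓ²(ℤ;ℝ))⁴ is C¹ and solves the error equations ψ̇₁ = δ⁺ψ₂ + Res₁, ψ̇₂ = δ⁻[W'(ψ₁;t)] + κψ₃ + Res₂, ψ̇₃ = ψ₄ − ψ₂ + Res₃, μψ̇₄ = −κψ₃ + Res₄, where the residuals satisfy sqrt(‖Res₁‖² + ‖Res₂‖² + ‖Res₃‖² + (1/μ)‖Res₄‖²) ≤ C₀μ^N at each t. Then the modified energy E(t) := Σ_{j∈ℤ}( W_j((ψ₁)_j;t) + (1/2)(ψ₂)_j² + (1/2)κ(ψ₃)_j² + (1/2)μ(ψ₄)_j² ) satisfies, at each t, Ė(t) ≤ (1/2)‖W'(ψ₁;t)‖² + (1/2)‖ψ₂‖² + (κ²/2)‖ψ₃‖² + (μ/2)‖ψ₄‖² + ‖∂_t W(ψ₁;t)‖_{ℓ¹} + (1/2)C₀²μ^{2N}. -/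
noncomputable section

/-- ℓ²(ℤ;ℝ). -/
abbrev L2Z : Type := lp (fun _ : ℤ => ℝ) 2

set_option maxHeartbeats 1000000

namespace MEE

lemma l2_apply_le (f : L2Z) (j : ℤ) : |f j| ≤ ‖f‖ := by
  simpa using lp.norm_apply_le_norm (by norm_num) f j

lemma l2_norm_sq (f : L2Z) : ‖f‖ ^ 2 = ∑' j, (f j) ^ 2 := by
  have := lp.norm_rpow_eq_tsum (p := 2) (by norm_num) f
  simp only [ENNReal.toReal_ofNat, Real.rpow_two, Real.norm_eq_abs, sq_abs] at this
  exact this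

lemma l2_summable_sq (f : L2Z) : Summable (fun j => (f j) ^ 2) := by
  have := lp.memℓp f
  rw [memℓp_gen_iff (by norm_num)] at this
  simpa [Real.rpow_two] using this

lemma summable_mul {f g : ℤ → ℝ} (hf : Summable fun j => f j ^ 2)
    (hg : Summable fun j => g j ^ 2) : Summable fun j => f j * g j := by
  refine Summable.of_abs (Summable.of_nonneg_of_le (fun j => abs_nonneg _)
    (fun j => ?_) (((hf.add hg)).div_const 2))
  rw [abs_mul]
  nlinarith [sq_nonneg (|f j| - |g j|), sq_abs (f j), sq_abs (g j), abs_nonneg (f j), abs_nonneg (g j)]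

lemma summable_abs_mul {f g : ℤ → ℝ} (hf : Summable fun j => f j ^ 2)
    (hg : Summable fun j => g j ^ 2) : Summable fun j => |f j * g j| := by
  have := summable_mul (f := fun j => |f j|) (g := fun j => |g j|) (by simpa [sq_abs] using hf)
    (by simpa [sq_abs] using hg)
  simpa [abs_mul] using this

lemma tsum_abs_mul_le {f g : ℤ → ℝ} (hf : Summable fun j => f j ^ 2)
    (hg : Summable fun j => g j ^ 2) :
    ∑' j, |f j * g j| ≤ Real.sqrt (∑' j, f j ^ 2) * Real.sqrt (∑' j, g j ^ 2) := by
  refine Summable.tsum_le_of_sum_le (summable_abs_mul hf hg) fun s => ?_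
  have h1 : (∑ j ∈ s, |f j * g j|) ^ 2 ≤ (∑ j ∈ s, f j ^ 2) * ∑ j ∈ s, g j ^ 2 := by
    have := Finset.sum_mul_sq_le_sq_mul_sq s (fun j => |f j|) (fun j => |g j|)
    simpa [abs_mul, sq_abs] using this
  have h2 : (∑ j ∈ s, f j ^ 2) * ∑ j ∈ s, g j ^ 2 ≤ (∑' j, f j ^ 2) * ∑' j, g j ^ 2 := by
    have hf' := Summable.sum_le_tsum s (fun j _ => sq_nonneg (f j)) hf
    have hg' := Summable.sum_le_tsum s (fun j _ => sq_nonneg (g j)) hg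
    have : (0:ℝ) ≤ ∑ j ∈ s, f j ^ 2 := Finset.sum_nonneg fun j _ => sq_nonneg _
    have : (0:ℝ) ≤ ∑ j ∈ s, g j ^ 2 := Finset.sum_nonneg fun j _ => sq_nonneg _
    nlinarith [Finset.sum_nonneg (fun j (_ : j ∈ s) => sq_nonneg (f j))]
  calc ∑ j ∈ s, |f j * g j| = Real.sqrt ((∑ j ∈ s, |f j * g j|) ^ 2) := by
        rw [Real.sqrt_sq (Finset.sum_nonneg fun j _ => abs_nonneg _)]
    _ ≤ Real.sqrt ((∑' j, f j ^ 2) * ∑' j, g j ^ 2) :=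
        Real.sqrt_le_sqrt (h1.trans h2)
    _ = _ := Real.sqrt_mul (tsum_nonneg fun j => sq_nonneg _) _

lemma abs_tsum_le (f : ℤ → ℝ) (h : Summable fun j => |f j|) :
    |∑' j, f j| ≤ ∑' j, |f j| := by
  simpa [Real.norm_eq_abs] using
    norm_tsum_le_tsum_norm (f := f) (by simpa [Real.norm_eq_abs] using h)

lemma bound_on {g : ℝ → ℝ} (hg : Continuous g) (M : ℝ) :
    ∃ B, 0 ≤ B ∧ ∀ x, |x| ≤ M → |g x| ≤ B := by
  obtain ⟨C, hC⟩ := (isCompact_Icc (a := -M) (b := M)).exists_bound_of_continuousOn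
    hg.continuousOn
  refine ⟨max C 0, le_max_right _ _, fun x hx => ?_⟩
  have h2 : |g x| ≤ C := by simpa using hC x ⟨(abs_le.mp hx).1, (abs_le.mp hx).2⟩
  exact h2.trans (le_max_left _ _)

lemma lip_on {g : ℝ → ℝ} (hg : ContDiff ℝ (⊤ : ℕ∞) g) (M : ℝ) :
    ∃ L, 0 ≤ L ∧ ∀ x y, |x| ≤ M → |y| ≤ M → |g x - g y| ≤ L * |x - y| := by
  obtain ⟨L, hL0, hL⟩ := bound_on (hg.continuous_deriv (by exact_mod_cast le_top)) M
  refine ⟨L, hL0, fun x y hx hy => ?_⟩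
  have := Convex.norm_image_sub_le_of_norm_hasDerivWithin_le
    (f := g) (f' := deriv g) (s := Set.Icc (-M) M) (C := L)
    (fun z _ => ((hg.differentiable (by simp)).differentiableAt.hasDerivAt).hasDerivWithinAt)
    (fun z hz => hL z (abs_le.mpr ⟨by linarith [hz.1], hz.2⟩))
    (convex_Icc _ _) ⟨(abs_le.mp hy).1, (abs_le.mp hy).2⟩ ⟨(abs_le.mp hx).1, (abs_le.mp hx).2⟩
  simpa [Real.norm_eq_abs] using this



/-- W_j(b) with parameter a. -/
def FF (V : ℝ → ℝ) (a b : ℝ) : ℝ := V (a + b) - V a - deriv V a * b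
/-- ∂ₐ FF. -/
def Fa (V : ℝ → ℝ) (a b : ℝ) : ℝ :=
  deriv V (a + b) - deriv V a - deriv (deriv V) a * b
/-- ∂_b FF. -/
def Fb (V : ℝ → ℝ) (a b : ℝ) : ℝ := deriv V (a + b) - deriv V a

variable {V : ℝ → ℝ}

lemma hV1 (hV : ContDiff ℝ (⊤ : ℕ∞) V) : ContDiff ℝ (⊤ : ℕ∞) (deriv V) :=
  (contDiff_infty_iff_deriv.mp hV).2

lemma hasDerivAt_V (hV : ContDiff ℝ (⊤ : ℕ∞) V) (x : ℝ) : HasDerivAt V (deriv V x) x :=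
  (hV.differentiable (by simp)).differentiableAt.hasDerivAt

lemma hasDerivAt_FFpath (hV : ContDiff ℝ (⊤ : ℕ∞) V) (a b Δa Δb θ : ℝ) :
    HasDerivAt (fun θ : ℝ => FF V (a + θ * Δa) (b + θ * Δb))
      (deriv V (a + θ * Δa + (b + θ * Δb)) * (Δa + Δb) - deriv V (a + θ * Δa) * Δa
        - (deriv (deriv V) (a + θ * Δa) * Δa * (b + θ * Δb)
            + deriv V (a + θ * Δa) * Δb)) θ := by
  have hA : HasDerivAt (fun θ : ℝ => a + θ * Δa) Δa θ := by
    simpa using ((hasDerivAt_id θ).mul_const Δa).const_add a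
  have hB : HasDerivAt (fun θ : ℝ => b + θ * Δb) Δb θ := by
    simpa using ((hasDerivAt_id θ).mul_const Δb).const_add b
  have hP : HasDerivAt (fun θ : ℝ => a + θ * Δa + (b + θ * Δb)) (Δa + Δb) θ := hA.add hB
  have t1 : HasDerivAt (fun θ : ℝ => V (a + θ * Δa + (b + θ * Δb)))
      (deriv V (a + θ * Δa + (b + θ * Δb)) * (Δa + Δb)) θ :=
    (hasDerivAt_V hV _).comp θ hP
  have t2 : HasDerivAt (fun θ : ℝ => V (a + θ * Δa)) (deriv V (a + θ * Δa) * Δa) θ :=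
    (hasDerivAt_V hV _).comp θ hA
  have t3a : HasDerivAt (fun θ : ℝ => deriv V (a + θ * Δa))
      (deriv (deriv V) (a + θ * Δa) * Δa) θ := (hasDerivAt_V (hV1 hV) _).comp θ hA
  have t3 : HasDerivAt (fun θ : ℝ => deriv V (a + θ * Δa) * (b + θ * Δb))
      (deriv (deriv V) (a + θ * Δa) * Δa * (b + θ * Δb)
        + deriv V (a + θ * Δa) * Δb) θ := t3a.mul hB
  exact (t1.sub t2).sub t3

/-- The master pointwise estimates. -/
lemma key (hV : ContDiff ℝ (⊤ : ℕ∞) V) (M : ℝ) (hM : 0 < M) : ∃ C, 0 ≤ C ∧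
    (∀ a b, |a| ≤ M → |b| ≤ M → |FF V a b| ≤ C * b ^ 2) ∧
    (∀ a b, |a| ≤ M → |b| ≤ M → |Fa V a b| ≤ C * |b|) ∧
    (∀ a b, |a| ≤ M → |b| ≤ M → |Fb V a b| ≤ C * |b|) ∧
    (∀ a b Δa Δb, |a| ≤ M → |b| ≤ M → |Δa| ≤ M → |Δb| ≤ M →
      |FF V (a + Δa) (b + Δb) - FF V a b - Fa V a b * Δa - Fb V a b * Δb|
        ≤ C * (Δa ^ 2 + Δb ^ 2)) := by
  obtain ⟨L2, hL20, hL2⟩ := lip_on (hV1 hV) (4 * M)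
  obtain ⟨B2, hB20, hB2⟩ := bound_on ((hV1 (hV1 hV)).continuous) (4 * M)
  obtain ⟨L3, hL30, hL3⟩ := lip_on (hV1 (hV1 hV)) (4 * M)
  set C₁ : ℝ := 4 * L2 + B2 + L3 * M with hC₁
  have hC₁0 : 0 ≤ C₁ := by positivity
  -- the main Taylor estimate
  have main : ∀ a b Δa Δb, |a| ≤ M → |b| ≤ M → |Δa| ≤ M → |Δb| ≤ M →
      |FF V (a + Δa) (b + Δb) - FF V a b - Fa V a b * Δa - Fb V a b * Δb|
        ≤ C₁ * (Δa ^ 2 + Δb ^ 2) := by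
    intro a b Δa Δb ha hb hda hdb
    set φd : ℝ → ℝ := fun θ =>
      deriv V (a + θ * Δa + (b + θ * Δb)) * (Δa + Δb) - deriv V (a + θ * Δa) * Δa
        - (deriv (deriv V) (a + θ * Δa) * Δa * (b + θ * Δb)
            + deriv V (a + θ * Δa) * Δb) with hφd
    -- derivative difference bound
    have hbound : ∀ θ ∈ Set.Icc (0:ℝ) 1, |φd θ - φd 0| ≤ C₁ * (Δa ^ 2 + Δb ^ 2) := by
      intro θ hθ
      obtain ⟨hθ0, hθ1⟩ := hθ
      have habs : |θ| ≤ 1 := by rw [abs_of_nonneg hθ0]; exact hθ1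
      have hA0 : |a + θ * Δa| ≤ 4 * M := by
        calc |a + θ * Δa| ≤ |a| + |θ| * |Δa| := by
              simpa [abs_mul] using abs_add_le a (θ * Δa)
          _ ≤ 4 * M := by nlinarith [abs_nonneg Δa]
      have haa : |a| ≤ 4 * M := by linarith
      have hP0 : |a + θ * Δa + (b + θ * Δb)| ≤ 4 * M := by
        have h1 := abs_add_le (a + θ * Δa) (b + θ * Δb)
        have h2 := abs_add_le b (θ * Δb)
        have h3 := abs_add_le a (θ * Δa)
        rw [abs_mul] at h2 h3
        nlinarith [abs_nonneg Δa, abs_nonneg Δb]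
      have hPab : |a + b| ≤ 4 * M := by
        have := abs_add_le a b; linarith
      -- pieces
      have e1 : |deriv V (a + θ * Δa + (b + θ * Δb)) - deriv V (a + b)| ≤
          L2 * (|Δa| + |Δb|) := by
        have := hL2 _ _ hP0 hPab
        have harg : |a + θ * Δa + (b + θ * Δb) - (a + b)| ≤ |Δa| + |Δb| := by
          have : a + θ * Δa + (b + θ * Δb) - (a + b) = θ * Δa + θ * Δb := by ring
          rw [this]
          calc |θ * Δa + θ * Δb| ≤ |θ * Δa| + |θ * Δb| := abs_add_le _ _
            _ ≤ |Δa| + |Δb| := by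
                rw [abs_mul, abs_mul]
                nlinarith [abs_nonneg Δa, abs_nonneg Δb]
        nlinarith [abs_nonneg (a + θ * Δa + (b + θ * Δb) - (a + b))]
      have e2 : |deriv V (a + θ * Δa) - deriv V a| ≤ L2 * |Δa| := by
        have h := hL2 _ _ hA0 haa
        have harg : |a + θ * Δa - a| ≤ |Δa| := by
          simp only [add_sub_cancel_left, abs_mul]
          nlinarith [abs_nonneg Δa]
        nlinarith [abs_nonneg (a + θ * Δa - a)]
      have e3 : |deriv (deriv V) (a + θ * Δa) * (b + θ * Δb)
          - deriv (deriv V) a * b| ≤ B2 * |Δb| + L3 * |Δa| * M := by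
        have h1 : |deriv (deriv V) (a + θ * Δa)| ≤ B2 := hB2 _ hA0
        have h2 : |deriv (deriv V) (a + θ * Δa) - deriv (deriv V) a| ≤ L3 * |Δa| := by
          have h := hL3 _ _ hA0 haa
          have harg : |a + θ * Δa - a| ≤ |Δa| := by
            simp only [add_sub_cancel_left, abs_mul]
            nlinarith [abs_nonneg Δa]
          nlinarith [abs_nonneg (a + θ * Δa - a)]
        have expand : deriv (deriv V) (a + θ * Δa) * (b + θ * Δb) - deriv (deriv V) a * b
            = deriv (deriv V) (a + θ * Δa) * (θ * Δb)
              + (deriv (deriv V) (a + θ * Δa) - deriv (deriv V) a) * b := by ring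
        rw [expand]
        calc _ ≤ |deriv (deriv V) (a + θ * Δa) * (θ * Δb)|
              + |(deriv (deriv V) (a + θ * Δa) - deriv (deriv V) a) * b| := abs_add_le _ _
          _ ≤ B2 * |Δb| + L3 * |Δa| * M := by
              rw [abs_mul, abs_mul, abs_mul]
              have hts : |θ| * |Δb| ≤ |Δb| := by
                nlinarith [abs_nonneg Δb]
              have t1 : |deriv (deriv V) (a + θ * Δa)| * (|θ| * |Δb|) ≤ B2 * |Δb| :=
                mul_le_mul h1 hts (by positivity) hB20
              have t2 : |deriv (deriv V) (a + θ * Δa) - deriv (deriv V) a| * |b|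
                  ≤ L3 * |Δa| * M :=
                mul_le_mul h2 hb (abs_nonneg b) (by positivity)
              linarith
      -- assemble
      have expand : φd θ - φd 0 =
          (deriv V (a + θ * Δa + (b + θ * Δb)) - deriv V (a + b)) * (Δa + Δb)
          - (deriv V (a + θ * Δa) - deriv V a) * Δa
          - ((deriv (deriv V) (a + θ * Δa) * (b + θ * Δb) - deriv (deriv V) a * b)) * Δa
          - (deriv V (a + θ * Δa) - deriv V a) * Δb := by
        simp only [hφd]; ring
      rw [expand]
      have habs4 := abs_add_le ((deriv V (a + θ * Δa + (b + θ * Δb)) - deriv V (a + b)) * (Δa + Δb))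
        (-((deriv V (a + θ * Δa) - deriv V a) * Δa))
      -- crude triangle inequality via abs_sub and bounds
      have T : ∀ x y z w : ℝ, |x - y - z - w| ≤ |x| + |y| + |z| + |w| := by
        intro x y z w
        calc |x - y - z - w| ≤ |x - y - z| + |w| := abs_sub _ _
          _ ≤ |x - y| + |z| + |w| := by linarith [abs_sub (x - y) z]
          _ ≤ |x| + |y| + |z| + |w| := by linarith [abs_sub x y]
      refine le_trans (T _ _ _ _) ?_
      rw [abs_mul, abs_mul, abs_mul, abs_mul]
      have hab : |Δa + Δb| ≤ |Δa| + |Δb| := abs_add_le _ _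
      have t1 : |deriv V (a + θ * Δa + (b + θ * Δb)) - deriv V (a + b)| * |Δa + Δb|
          ≤ (L2 * (|Δa| + |Δb|)) * (|Δa| + |Δb|) :=
        mul_le_mul e1 hab (abs_nonneg _) (by positivity)
      have t2 : |deriv V (a + θ * Δa) - deriv V a| * |Δa| ≤ (L2 * |Δa|) * |Δa| :=
        mul_le_mul_of_nonneg_right e2 (abs_nonneg _)
      have t3 : |deriv (deriv V) (a + θ * Δa) * (b + θ * Δb) - deriv (deriv V) a * b| * |Δa|
          ≤ (B2 * |Δb| + L3 * |Δa| * M) * |Δa| :=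
        mul_le_mul_of_nonneg_right e3 (abs_nonneg _)
      have t4 : |deriv V (a + θ * Δa) - deriv V a| * |Δb| ≤ (L2 * |Δa|) * |Δb| :=
        mul_le_mul_of_nonneg_right e2 (abs_nonneg _)
      have hu2 : |Δa| ^ 2 = Δa ^ 2 := sq_abs _
      have hv2 : |Δb| ^ 2 = Δb ^ 2 := sq_abs _
      have key2 : L2 * (|Δa| + |Δb|) * (|Δa| + |Δb|) + L2 * |Δa| * |Δa|
          + (B2 * |Δb| + L3 * |Δa| * M) * |Δa| + L2 * |Δa| * |Δb|
          ≤ C₁ * (|Δa| ^ 2 + |Δb| ^ 2) := by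
        rw [hC₁]
        nlinarith [sq_nonneg (|Δa| - |Δb|), abs_nonneg Δa, abs_nonneg Δb,
          mul_nonneg hL20 (sq_nonneg (|Δa| - |Δb|)),
          mul_nonneg hB20 (sq_nonneg (|Δa| - |Δb|)),
          mul_nonneg (mul_nonneg hL30 hM.le) (sq_nonneg (|Δa| - |Δb|)),
          mul_nonneg hL20 (sq_nonneg (|Δa| + |Δb|)),
          mul_nonneg (mul_nonneg hL30 hM.le) (sq_nonneg (|Δb|))]
      rw [hu2, hv2] at key2
      linarith [t1, t2, t3, t4, key2]
    -- mean value
    have hψ : ∀ θ ∈ Set.Icc (0:ℝ) 1,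
        HasDerivWithinAt (fun θ : ℝ => FF V (a + θ * Δa) (b + θ * Δb) - θ * φd 0)
          (φd θ - φd 0) (Set.Icc (0:ℝ) 1) θ := by
      intro θ _
      have h1 := hasDerivAt_FFpath hV a b Δa Δb θ
      have h2 : HasDerivAt (fun θ : ℝ => θ * φd 0) (φd 0) θ := by
        simpa using (hasDerivAt_id θ).mul_const (φd 0)
      have h3 := (h1.sub h2).hasDerivWithinAt (s := Set.Icc (0:ℝ) 1)
      exact h3
    have hMVT := Convex.norm_image_sub_le_of_norm_hasDerivWithin_le
      (f := fun θ : ℝ => FF V (a + θ * Δa) (b + θ * Δb) - θ * φd 0)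
      (f' := fun θ => φd θ - φd 0) (s := Set.Icc (0:ℝ) 1)
      (C := C₁ * (Δa ^ 2 + Δb ^ 2))
      hψ
      (fun θ hθ => by simpa [Real.norm_eq_abs] using hbound θ hθ)
      (convex_Icc _ _) (Set.left_mem_Icc.mpr zero_le_one) (Set.right_mem_Icc.mpr zero_le_one)
    simp only [Real.norm_eq_abs] at hMVT
    norm_num at hMVT
    have hφd0 : φd 0 = Fa V a b * Δa + Fb V a b * Δb := by
      simp only [hφd, Fa, Fb]; ring
    have hre : FF V (a + Δa) (b + Δb) - φd 0 - FF V a b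
        = FF V (a + Δa) (b + Δb) - FF V a b - Fa V a b * Δa - Fb V a b * Δb := by
      rw [hφd0]; ring
    rw [hre] at hMVT
    exact hMVT
  refine ⟨L2 + B2 + C₁, by positivity, ?_, ?_, ?_, ?_⟩
  · -- |FF a b| ≤ C b² from main with Δa = 0, b ↦ 0, Δb := b
    intro a b ha hb
    have h := main a 0 0 b ha (by simpa using hM.le) (by simpa using hM.le) hb
    have hFF0 : FF V a 0 = 0 := by simp [FF]
    have hFb0 : Fb V a 0 = 0 := by simp [Fb]
    have hFa0 : Fa V a 0 = 0 := by simp [Fa]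
    simp only [hFF0, hFb0, hFa0, zero_add, add_zero, mul_zero, zero_mul, sub_zero] at h
    nlinarith [sq_nonneg b, abs_nonneg (FF V a b)]
  · -- |Fa a b| ≤ (L2+B2)|b|
    intro a b ha hb
    have h1 : |deriv V (a + b) - deriv V a| ≤ L2 * |b| := by
      have h := hL2 (a + b) a (by have := abs_add_le a b; nlinarith [abs_nonneg a, abs_nonneg b])
        (by nlinarith [abs_nonneg a])
      simpa using h
    have h2 : |deriv (deriv V) a * b| ≤ B2 * |b| := by
      rw [abs_mul]
      have := hB2 a (by nlinarith [abs_nonneg a])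
      nlinarith [abs_nonneg b]
    have := abs_sub (deriv V (a + b) - deriv V a) (deriv (deriv V) a * b)
    have hexp : Fa V a b = (deriv V (a + b) - deriv V a) - deriv (deriv V) a * b := rfl
    rw [hexp]
    nlinarith [abs_nonneg b, mul_nonneg hC₁0 (abs_nonneg b)]
  · intro a b ha hb
    have h := hL2 (a + b) a (by have := abs_add_le a b; nlinarith [abs_nonneg a, abs_nonneg b])
      (by nlinarith [abs_nonneg a])
    have hexp : Fb V a b = deriv V (a + b) - deriv V a := rfl
    rw [hexp]
    have : |a + b - a| = |b| := by congr 1; ring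
    nlinarith [abs_nonneg b, mul_nonneg hB20 (abs_nonneg b), mul_nonneg hC₁0 (abs_nonneg b)]
  · intro a b Δa Δb ha hb hda hdb
    have := main a b Δa Δb ha hb hda hdb
    nlinarith [sq_nonneg Δa, sq_nonneg Δb, mul_nonneg hL20 (add_nonneg (sq_nonneg Δa) (sq_nonneg Δb)),
      mul_nonneg hB20 (add_nonneg (sq_nonneg Δa) (sq_nonneg Δb))]

open Asymptotics Filter
namespace MEE
variable {V : ℝ → ℝ}

lemma summable_FF (hV : ContDiff ℝ (⊤ : ℕ∞) V) (r x : L2Z) :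
    Summable (fun j => FF V (r j) (x j)) := by
  set M : ℝ := ‖r‖ + ‖x‖ + 1 with hM
  have hM0 : 0 < M := by positivity
  obtain ⟨C, hC0, hFFb, -, -, -⟩ := key hV M hM0
  refine Summable.of_abs (Summable.of_nonneg_of_le (fun j => abs_nonneg _)
    (fun j => ?_) ((l2_summable_sq x).mul_left C))
  exact hFFb _ _ ((l2_apply_le r j).trans (by nlinarith [norm_nonneg x]))
    ((l2_apply_le x j).trans (by nlinarith [norm_nonneg r]))

lemma summable_sq_of_le {c : ℤ → ℝ} {x : L2Z} {C : ℝ} (hC : 0 ≤ C)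
    (h : ∀ j, |c j| ≤ C * |x j|) : Summable (fun j => c j ^ 2) := by
  refine Summable.of_nonneg_of_le (fun j => sq_nonneg _) (fun j => ?_)
    ((l2_summable_sq x).mul_left (C ^ 2))
  calc c j ^ 2 = |c j| ^ 2 := (sq_abs _).symm
    _ ≤ (C * |x j|) ^ 2 := by nlinarith [abs_nonneg (c j), abs_nonneg (x j), h j]
    _ = C ^ 2 * x j ^ 2 := by rw [mul_pow, sq_abs]

/-- Derivative of the potential-energy part along C¹ curves in ℓ². -/
lemma hasDerivWithinAt_Phi (hV : ContDiff ℝ (⊤ : ℕ∞) V) {S : Set ℝ} {t : ℝ} (ht : t ∈ S)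
    {r x : ℝ → L2Z} {r' x' : L2Z}
    (hr : HasDerivWithinAt r r' S t) (hx : HasDerivWithinAt x x' S t) :
    HasDerivWithinAt (fun s => ∑' j, FF V (r s j) (x s j))
      (∑' j, (Fa V (r t j) (x t j) * r' j + Fb V (r t j) (x t j) * x' j)) S t := by
  classical
  set S' : Set ℝ := {s | s ∈ S ∧ ‖r s - r t‖ ≤ 1 ∧ ‖x s - x t‖ ≤ 1} with hS'
  have hS'mem : S' ∈ nhdsWithin t S := by
    have h1 : ∀ᶠ s in nhdsWithin t S, ‖r s - r t‖ ≤ 1 := by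
      have := hr.continuousWithinAt (Metric.closedBall_mem_nhds (r t) one_pos)
      filter_upwards [this] with s hs
      simpa [Metric.mem_closedBall, dist_eq_norm] using hs
    have h2 : ∀ᶠ s in nhdsWithin t S, ‖x s - x t‖ ≤ 1 := by
      have := hx.continuousWithinAt (Metric.closedBall_mem_nhds (x t) one_pos)
      filter_upwards [this] with s hs
      simpa [Metric.mem_closedBall, dist_eq_norm] using hs
    have h3 : ∀ᶠ s in nhdsWithin t S, s ∈ S' := by
      filter_upwards [h1, h2, self_mem_nhdsWithin] with s a b c
      exact ⟨c, a, b⟩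
    simpa only [Filter.eventually_iff, Set.setOf_mem_eq] using h3
  have ht' : t ∈ S' := ⟨ht, by simp, by simp⟩
  have hrS : HasDerivWithinAt r r' S' t := hr.mono fun s hs => hs.1
  have hxS : HasDerivWithinAt x x' S' t := hx.mono fun s hs => hs.1
  refine HasDerivWithinAt.mono_of_mem_nhdsWithin ?_ hS'mem
  set M : ℝ := ‖r t‖ + ‖x t‖ + 2 with hMdef
  have hM0 : 0 < M := by positivity
  obtain ⟨C, hC0, hFFb, hFab, hFbb, hTay⟩ := key hV M hM0
  set c : ℤ → ℝ := fun j => Fa V (r t j) (x t j) with hc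
  set a : ℤ → ℝ := fun j => Fb V (r t j) (x t j) with ha
  have hrtj : ∀ j, |r t j| ≤ M := fun j =>
    (l2_apply_le (r t) j).trans (by nlinarith [norm_nonneg (x t)])
  have hxtj : ∀ j, |x t j| ≤ M := fun j =>
    (l2_apply_le (x t) j).trans (by nlinarith [norm_nonneg (r t)])
  have hc_sq : Summable (fun j => c j ^ 2) :=
    summable_sq_of_le hC0 (fun j => hFab _ _ (hrtj j) (hxtj j))
  have ha_sq : Summable (fun j => a j ^ 2) :=
    summable_sq_of_le hC0 (fun j => hFbb _ _ (hrtj j) (hxtj j))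
  set Kc : ℝ := Real.sqrt (∑' j, c j ^ 2) with hKc
  set Ka : ℝ := Real.sqrt (∑' j, a j ^ 2) with hKa
  rw [hasDerivWithinAt_iff_isLittleO]
  -- the pointwise estimate
  have claim : ∀ s ∈ S',
      |(∑' j, FF V (r s j) (x s j)) - (∑' j, FF V (r t j) (x t j))
          - (s - t) • (∑' j, (c j * r' j + a j * x' j))|
        ≤ C * (‖r s - r t‖ ^ 2 + ‖x s - x t‖ ^ 2)
          + Kc * ‖r s - r t - (s - t) • r'‖ + Ka * ‖x s - x t - (s - t) • x'‖ := by
    intro s hs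
    obtain ⟨hsS, hs1, hs2⟩ := hs
    set Δr : L2Z := r s - r t with hΔr
    set Δx : L2Z := x s - x t with hΔx
    set zr : L2Z := r s - r t - (s - t) • r' with hzr
    set zx : L2Z := x s - x t - (s - t) • x' with hzx
    have hΔrj : ∀ j, Δr j = r s j - r t j := fun j => by
      simp [hΔr, lp.coeFn_sub]
    have hΔxj : ∀ j, Δx j = x s j - x t j := fun j => by
      simp [hΔx, lp.coeFn_sub]
    have hzrj : ∀ j, zr j = r s j - r t j - (s - t) * r' j := fun j => by
      rfl
    have hzxj : ∀ j, zx j = x s j - x t j - (s - t) * x' j := fun j => by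
      rfl
    have hΔrb : ∀ j, |Δr j| ≤ M := fun j =>
      (l2_apply_le Δr j).trans (by nlinarith [norm_nonneg (r t), norm_nonneg (x t)])
    have hΔxb : ∀ j, |Δx j| ≤ M := fun j =>
      (l2_apply_le Δx j).trans (by nlinarith [norm_nonneg (r t), norm_nonneg (x t)])
    -- Taylor term
    set T1 : ℤ → ℝ := fun j => FF V (r s j) (x s j) - FF V (r t j) (x t j)
      - c j * Δr j - a j * Δx j with hT1def
    have hT1 : ∀ j, |T1 j| ≤ C * (Δr j ^ 2 + Δx j ^ 2) := by
      intro j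
      have h := hTay (r t j) (x t j) (Δr j) (Δx j) (hrtj j) (hxtj j) (hΔrb j) (hΔxb j)
      have e1 : r t j + Δr j = r s j := by rw [hΔrj]; ring
      have e2 : x t j + Δx j = x s j := by rw [hΔxj]; ring
      rw [e1, e2] at h
      simpa [hT1def, hc, ha] using h
    have hcr : Summable fun j => c j * Δr j :=
      summable_mul hc_sq (l2_summable_sq Δr)
    have hax : Summable fun j => a j * Δx j :=
      summable_mul ha_sq (l2_summable_sq Δx)
    have hsumT1 : Summable T1 := by
      refine ((((summable_FF hV (r s) (x s)).sub
        (summable_FF hV (r t) (x t))).sub hcr).sub hax)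
    have hT1bound : |∑' j, T1 j| ≤ C * (‖Δr‖ ^ 2 + ‖Δx‖ ^ 2) := by
      have h1 : |∑' j, T1 j| ≤ ∑' j, |T1 j| := abs_tsum_le _ hsumT1.abs
      have h2 : ∑' j, |T1 j| ≤ ∑' j, C * (Δr j ^ 2 + Δx j ^ 2) :=
        Summable.tsum_le_tsum hT1 hsumT1.abs
          (((l2_summable_sq Δr).add (l2_summable_sq Δx)).mul_left C)
      have h3 : ∑' j, C * (Δr j ^ 2 + Δx j ^ 2) = C * (‖Δr‖ ^ 2 + ‖Δx‖ ^ 2) := by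
        rw [tsum_mul_left, Summable.tsum_add (l2_summable_sq Δr) (l2_summable_sq Δx),
          l2_norm_sq, l2_norm_sq]
      linarith
    -- linear remainder term
    have hczr : Summable fun j => c j * zr j := summable_mul hc_sq (l2_summable_sq zr)
    have hazx : Summable fun j => a j * zx j := summable_mul ha_sq (l2_summable_sq zx)
    have hT2bound : |∑' j, (c j * zr j + a j * zx j)| ≤ Kc * ‖zr‖ + Ka * ‖zx‖ := by
      rw [Summable.tsum_add hczr hazx]
      have b1 : |∑' j, c j * zr j| ≤ Kc * ‖zr‖ := by
        have := tsum_abs_mul_le hc_sq (l2_summable_sq zr)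
        have habs : |∑' j, c j * zr j| ≤ ∑' j, |c j * zr j| :=
          abs_tsum_le _ (summable_abs_mul hc_sq (l2_summable_sq zr))
        have : Real.sqrt (∑' j, zr j ^ 2) = ‖zr‖ := by
          rw [← l2_norm_sq]; exact Real.sqrt_sq (norm_nonneg _)
        calc |∑' j, c j * zr j| ≤ ∑' j, |c j * zr j| := habs
          _ ≤ Kc * Real.sqrt (∑' j, zr j ^ 2) :=
              tsum_abs_mul_le hc_sq (l2_summable_sq zr)
          _ = Kc * ‖zr‖ := by rw [this]
      have b2 : |∑' j, a j * zx j| ≤ Ka * ‖zx‖ := by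
        have habs : |∑' j, a j * zx j| ≤ ∑' j, |a j * zx j| :=
          abs_tsum_le _ (summable_abs_mul ha_sq (l2_summable_sq zx))
        have h4 : Real.sqrt (∑' j, zx j ^ 2) = ‖zx‖ := by
          rw [← l2_norm_sq]; exact Real.sqrt_sq (norm_nonneg _)
        calc |∑' j, a j * zx j| ≤ ∑' j, |a j * zx j| := habs
          _ ≤ Ka * Real.sqrt (∑' j, zx j ^ 2) :=
              tsum_abs_mul_le ha_sq (l2_summable_sq zx)
          _ = Ka * ‖zx‖ := by rw [h4]
      calc |∑' j, c j * zr j + ∑' j, a j * zx j|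
          ≤ |∑' j, c j * zr j| + |∑' j, a j * zx j| := abs_add_le _ _
        _ ≤ Kc * ‖zr‖ + Ka * ‖zx‖ := by linarith
    -- identify the error as ∑T1 + ∑T2
    have hcr' : Summable fun j => c j * r' j := summable_mul hc_sq (l2_summable_sq r')
    have hax' : Summable fun j => a j * x' j := summable_mul ha_sq (l2_summable_sq x')
    have hsplit : (∑' j, FF V (r s j) (x s j)) - (∑' j, FF V (r t j) (x t j))
        - (s - t) • (∑' j, (c j * r' j + a j * x' j))
        = (∑' j, T1 j) + ∑' j, (c j * zr j + a j * zx j) := by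
      have e1 : ∀ j, c j * zr j + a j * zx j =
          (c j * Δr j + a j * Δx j) - (s - t) * (c j * r' j + a j * x' j) := by
        intro j
        rw [hzrj, hzxj, hΔrj, hΔxj]
        ring
      have e2 : ∑' j, (c j * zr j + a j * zx j)
          = (∑' j, (c j * Δr j + a j * Δx j))
            - (s - t) * ∑' j, (c j * r' j + a j * x' j) := by
        rw [← tsum_mul_left, ← Summable.tsum_sub (hcr.add hax)
          (((hcr'.add hax')).mul_left (s - t))]
        exact tsum_congr e1
      have e3 : ∑' j, T1 j = ((∑' j, FF V (r s j) (x s j))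
          - (∑' j, FF V (r t j) (x t j))) - ∑' j, (c j * Δr j + a j * Δx j) := by
        rw [← Summable.tsum_sub (summable_FF hV (r s) (x s)) (summable_FF hV (r t) (x t)),
          ← Summable.tsum_sub ((summable_FF hV (r s) (x s)).sub (summable_FF hV (r t) (x t)))
            (hcr.add hax)]
        refine tsum_congr fun j => ?_
        simp only [hT1def]; ring
      rw [e2, e3]
      simp only [smul_eq_mul]
      ring
    rw [hsplit]
    calc |(∑' j, T1 j) + ∑' j, (c j * zr j + a j * zx j)|
        ≤ |∑' j, T1 j| + |∑' j, (c j * zr j + a j * zx j)| := abs_add_le _ _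
      _ ≤ C * (‖Δr‖ ^ 2 + ‖Δx‖ ^ 2) + (Kc * ‖zr‖ + Ka * ‖zx‖) :=
          add_le_add hT1bound hT2bound
      _ = _ := by ring
  -- asymptotics
  have hKc0 : 0 ≤ Kc := Real.sqrt_nonneg _
  have hKa0 : 0 ≤ Ka := Real.sqrt_nonneg _
  have hsub : Filter.Tendsto (fun s => s - t) (nhdsWithin t S') (nhds 0) := by
    have h0 : ContinuousWithinAt (fun s : ℝ => s - t) S' t :=
      (continuous_id.sub continuous_const).continuousWithinAt
    have h0' : Filter.Tendsto (fun s : ℝ => s - t) (nhdsWithin t S') (nhds (t - t)) := h0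
    simpa using h0'
  have hlin : (fun s : ℝ => (s - t) * (s - t)) =o[nhdsWithin t S'] fun s => s - t := by
    have h1 : (fun s : ℝ => s - t) =o[nhdsWithin t S'] (fun _ => (1 : ℝ)) :=
      (isLittleO_one_iff ℝ).mpr hsub
    simpa using h1.mul_isBigO (isBigO_refl (fun s : ℝ => s - t) _)
  have hrO : (fun s => ‖r s - r t‖) =O[nhdsWithin t S'] fun s => s - t :=
    hrS.hasFDerivWithinAt.isBigO_sub.norm_left
  have hxO : (fun s => ‖x s - x t‖) =O[nhdsWithin t S'] fun s => s - t :=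
    hxS.hasFDerivWithinAt.isBigO_sub.norm_left
  have hrsq : (fun s => ‖r s - r t‖ ^ 2) =o[nhdsWithin t S'] fun s => s - t := by
    have := (hrO.mul hrO).trans_isLittleO hlin
    simpa [pow_two] using this
  have hxsq : (fun s => ‖x s - x t‖ ^ 2) =o[nhdsWithin t S'] fun s => s - t := by
    have := (hxO.mul hxO).trans_isLittleO hlin
    simpa [pow_two] using this
  have hzro : (fun s => ‖r s - r t - (s - t) • r'‖) =o[nhdsWithin t S'] fun s => s - t :=
    (hasDerivWithinAt_iff_isLittleO.mp hrS).norm_left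
  have hzxo : (fun s => ‖x s - x t - (s - t) • x'‖) =o[nhdsWithin t S'] fun s => s - t :=
    (hasDerivWithinAt_iff_isLittleO.mp hxS).norm_left
  have hG : (fun s => C * (‖r s - r t‖ ^ 2 + ‖x s - x t‖ ^ 2)
      + Kc * ‖r s - r t - (s - t) • r'‖ + Ka * ‖x s - x t - (s - t) • x'‖)
      =o[nhdsWithin t S'] fun s => s - t := by
    have h1 := (hrsq.add hxsq).const_mul_left C
    have h2 := hzro.const_mul_left Kc
    have h3 := hzxo.const_mul_left Ka
    exact (h1.add h2).add h3
  refine Asymptotics.IsBigO.trans_isLittleO ?_ hG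
  rw [isBigO_iff]
  refine ⟨1, ?_⟩
  filter_upwards [self_mem_nhdsWithin] with s hs
  have h := claim s hs
  have hGn : 0 ≤ C * (‖r s - r t‖ ^ 2 + ‖x s - x t‖ ^ 2)
      + Kc * ‖r s - r t - (s - t) • r'‖ + Ka * ‖x s - x t - (s - t) • x'‖ :=
    add_nonneg (add_nonneg (mul_nonneg hC0 (by positivity))
      (mul_nonneg hKc0 (norm_nonneg _))) (mul_nonneg hKa0 (norm_nonneg _))
  rw [Real.norm_eq_abs, Real.norm_eq_abs, one_mul, abs_of_nonneg hGn]
  exact h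
end MEE


end MEE

lemma MEE.arith_final {A SA B C' D P1 P2 P3 P4 κ μ q T1 T2 T3 T4 : ℝ}
    (hA2 : A ^ 2 = SA) (hκ : 0 < κ) (hμ : 0 < μ)
    (hX : P1 ^ 2 + P2 ^ 2 + P3 ^ 2 + (1 / μ) * P4 ^ 2 ≤ q ^ 2)
    (hT1 : T1 ≤ A * P1) (hT2 : T2 ≤ B * P2) (hT3 : T3 ≤ κ * (C' * P3)) (hT4 : T4 ≤ D * P4) :
    T1 + T2 + T3 + T4
      ≤ 1 / 2 * SA + 1 / 2 * B ^ 2 + κ ^ 2 / 2 * C' ^ 2 + μ / 2 * D ^ 2 + 1 / 2 * q ^ 2 := by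
  have am1 : A * P1 ≤ 1 / 2 * A ^ 2 + 1 / 2 * P1 ^ 2 := by nlinarith [sq_nonneg (A - P1)]
  have am2 : B * P2 ≤ 1 / 2 * B ^ 2 + 1 / 2 * P2 ^ 2 := by nlinarith [sq_nonneg (B - P2)]
  have am3 : κ * (C' * P3) ≤ κ ^ 2 / 2 * C' ^ 2 + 1 / 2 * P3 ^ 2 := by
    nlinarith [sq_nonneg (κ * C' - P3)]
  have am4 : D * P4 ≤ μ / 2 * D ^ 2 + 1 / 2 * ((1 / μ) * P4 ^ 2) := by
    have hnn := div_nonneg (sq_nonneg (μ * D - P4)) hμ.le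
    have hexp : (μ * D - P4) ^ 2 / μ
        = μ * D ^ 2 - 2 * (D * P4) + (1 / μ) * P4 ^ 2 := by
      field_simp
      ring
    rw [hexp] at hnn
    linarith
  rw [← hA2] at *
  linarith


/-- The key energy estimate: if `Ψ = (ψ₁,ψ₂,ψ₃,ψ₄)` is a C¹ curve in `(ℓ²)⁴` solving the
error equations
`ψ̇₁ = δ⁺ψ₂ + Res₁`, `ψ̇₂ = δ⁻[W'(ψ₁;t)] + κψ₃ + Res₂`, `ψ̇₃ = ψ₄ − ψ₂ + Res₃`,
`μψ̇₄ = −κψ₃ + Res₄`, with residuals satisfying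
`sqrt(‖Res₁‖² + ‖Res₂‖² + ‖Res₃‖² + (1/μ)‖Res₄‖²) ≤ C₀μ^N`, then the modified energy
`E(t) = Σ_j ( W_j((ψ₁)_j;t) + ½(ψ₂)_j² + ½κ(ψ₃)_j² + ½μ(ψ₄)_j² )` satisfies
`Ė ≤ ½‖W'(ψ₁;t)‖² + ½‖ψ₂‖² + (κ²/2)‖ψ₃‖² + (μ/2)‖ψ₄‖² + ‖∂ₜW(ψ₁;t)‖_{ℓ¹} + ½C₀²μ^{2N}`.
Here `W_j(ζ;t) := V(R̃_j(t)+ζ) − V(R̃_j(t)) − V'(R̃_j(t))ζ` and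
`W'_j(ζ;t) := V'(R̃_j(t)+ζ) − V'(R̃_j(t))`. -/
theorem modified_energy_estimate
    (V : ℝ → ℝ) (hV : ContDiff ℝ (⊤ : ℕ∞) V)
    (k : ℝ) (hkdef : k = deriv (deriv V) 0) (hk : 0 < k)
    (κ μ C₀ N T : ℝ) (hκ : 0 < κ) (hμ : 0 < μ) (hC₀ : 0 < C₀) (hN : 0 < N) (hT : 0 < T)
    -- the C¹ reference curve R̃ and its derivative
    (Rt Rt' : ℝ → L2Z)
    (hdRt : ∀ t ∈ Set.Icc (-T) T, HasDerivWithinAt Rt (Rt' t) (Set.Icc (-T) T) t)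
    -- the C¹ error curve Ψ, its derivatives, and the residuals
    (ψ₁ ψ₂ ψ₃ ψ₄ dψ₁ dψ₂ dψ₃ dψ₄ Res₁ Res₂ Res₃ Res₄ : ℝ → L2Z)
    (hd₁ : ∀ t ∈ Set.Icc (-T) T, HasDerivWithinAt ψ₁ (dψ₁ t) (Set.Icc (-T) T) t)
    (hd₂ : ∀ t ∈ Set.Icc (-T) T, HasDerivWithinAt ψ₂ (dψ₂ t) (Set.Icc (-T) T) t)
    (hd₃ : ∀ t ∈ Set.Icc (-T) T, HasDerivWithinAt ψ₃ (dψ₃ t) (Set.Icc (-T) T) t)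
    (hd₄ : ∀ t ∈ Set.Icc (-T) T, HasDerivWithinAt ψ₄ (dψ₄ t) (Set.Icc (-T) T) t)
    -- the error equations, componentwise
    (heq₁ : ∀ t ∈ Set.Icc (-T) T, ∀ j : ℤ,
      dψ₁ t j = (ψ₂ t (j + 1) - ψ₂ t j) + Res₁ t j)
    (heq₂ : ∀ t ∈ Set.Icc (-T) T, ∀ j : ℤ,
      dψ₂ t j = ((deriv V (Rt t j + ψ₁ t j) - deriv V (Rt t j))
          - (deriv V (Rt t (j - 1) + ψ₁ t (j - 1)) - deriv V (Rt t (j - 1))))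
        + κ * ψ₃ t j + Res₂ t j)
    (heq₃ : ∀ t ∈ Set.Icc (-T) T, ∀ j : ℤ,
      dψ₃ t j = ψ₄ t j - ψ₂ t j + Res₃ t j)
    (heq₄ : ∀ t ∈ Set.Icc (-T) T, ∀ j : ℤ,
      μ * dψ₄ t j = -(κ * ψ₃ t j) + Res₄ t j)
    -- the residuals are small
    (hres : ∀ t ∈ Set.Icc (-T) T,
      Real.sqrt (‖Res₁ t‖ ^ 2 + ‖Res₂ t‖ ^ 2 + ‖Res₃ t‖ ^ 2 + (1 / μ) * ‖Res₄ t‖ ^ 2) ≤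
        C₀ * μ ^ N) :
    ∀ t ∈ Set.Icc (-T) T, ∃ E' : ℝ,
      HasDerivWithinAt (fun s : ℝ => ∑' j : ℤ,
          ((V (Rt s j + ψ₁ s j) - V (Rt s j) - deriv V (Rt s j) * ψ₁ s j)
            + 1 / 2 * (ψ₂ s j) ^ 2 + 1 / 2 * κ * (ψ₃ s j) ^ 2 + 1 / 2 * μ * (ψ₄ s j) ^ 2))
        E' (Set.Icc (-T) T) t ∧
      E' ≤ 1 / 2 * (∑' j : ℤ, (deriv V (Rt t j + ψ₁ t j) - deriv V (Rt t j)) ^ 2)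
        + 1 / 2 * ‖ψ₂ t‖ ^ 2 + κ ^ 2 / 2 * ‖ψ₃ t‖ ^ 2 + μ / 2 * ‖ψ₄ t‖ ^ 2
        + (∑' j : ℤ, |(deriv V (Rt t j + ψ₁ t j) - deriv V (Rt t j)
            - deriv (deriv V) (Rt t j) * ψ₁ t j) * Rt' t j|)
        + 1 / 2 * C₀ ^ 2 * μ ^ (2 * N) := by
  intro t ht
  classical
  open MEE in
  set I : Set ℝ := Set.Icc (-T) T with hI
  set c : ℤ → ℝ := fun j => MEE.Fa V (Rt t j) (ψ₁ t j) with hc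
  set a : ℤ → ℝ := fun j => MEE.Fb V (Rt t j) (ψ₁ t j) with ha
  -- summability of the coefficient sequences
  have hM0 : (0:ℝ) < ‖Rt t‖ + ‖ψ₁ t‖ + 1 := by positivity
  obtain ⟨C, hC0, -, hFab, hFbb, -⟩ := MEE.key hV _ hM0
  have hrtj : ∀ j, |Rt t j| ≤ ‖Rt t‖ + ‖ψ₁ t‖ + 1 := fun j =>
    (MEE.l2_apply_le (Rt t) j).trans (by nlinarith [norm_nonneg (ψ₁ t)])
  have hxtj : ∀ j, |ψ₁ t j| ≤ ‖Rt t‖ + ‖ψ₁ t‖ + 1 := fun j =>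
    (MEE.l2_apply_le (ψ₁ t) j).trans (by nlinarith [norm_nonneg (Rt t)])
  have hc_sq : Summable fun j => c j ^ 2 :=
    MEE.summable_sq_of_le hC0 fun j => hFab _ _ (hrtj j) (hxtj j)
  have ha_sq : Summable fun j => a j ^ 2 :=
    MEE.summable_sq_of_le hC0 fun j => hFbb _ _ (hrtj j) (hxtj j)
  -- define the derivative value
  set DΦ : ℝ := ∑' j, (c j * Rt' t j + a j * dψ₁ t j) with hDΦ
  set E' : ℝ := DΦ + (∑' j, ψ₂ t j * dψ₂ t j) + κ * (∑' j, ψ₃ t j * dψ₃ t j)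
    + μ * (∑' j, ψ₄ t j * dψ₄ t j) with hE'
  refine ⟨E', ?_, ?_⟩
  · -- the derivative statement
    have h1 : HasDerivWithinAt (fun s => ∑' j, MEE.FF V (Rt s j) (ψ₁ s j)) DΦ I t :=
      MEE.hasDerivWithinAt_Phi hV ht (hdRt t ht) (hd₁ t ht)
    have inner_tsum : ∀ f g : L2Z, (inner ℝ f g : ℝ) = ∑' j, f j * g j := by
      intro f g
      rw [lp.inner_eq_tsum]
      simp [RCLike.inner_apply]
      exact tsum_congr fun j => mul_comm _ _
    have h2 : HasDerivWithinAt (fun s => (1/2 : ℝ) * (inner ℝ (ψ₂ s) (ψ₂ s) : ℝ))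
        (∑' j, ψ₂ t j * dψ₂ t j) I t := by
      have h0 := ((hd₂ t ht).inner ℝ (hd₂ t ht)).const_mul (1/2 : ℝ)
      have hcomm : (inner ℝ (dψ₂ t) (ψ₂ t) : ℝ) = inner ℝ (ψ₂ t) (dψ₂ t) :=
        real_inner_comm _ _
      rw [hcomm] at h0
      refine h0.congr_deriv ?_
      rw [inner_tsum]
      ring
    have h3 : HasDerivWithinAt (fun s => (1/2 : ℝ) * κ * (inner ℝ (ψ₃ s) (ψ₃ s) : ℝ))
        (κ * ∑' j, ψ₃ t j * dψ₃ t j) I t := by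
      have h0 := ((hd₃ t ht).inner ℝ (hd₃ t ht)).const_mul ((1/2 : ℝ) * κ)
      have hcomm : (inner ℝ (dψ₃ t) (ψ₃ t) : ℝ) = inner ℝ (ψ₃ t) (dψ₃ t) :=
        real_inner_comm _ _
      rw [hcomm] at h0
      refine h0.congr_deriv ?_
      rw [inner_tsum]
      ring
    have h4 : HasDerivWithinAt (fun s => (1/2 : ℝ) * μ * (inner ℝ (ψ₄ s) (ψ₄ s) : ℝ))
        (μ * ∑' j, ψ₄ t j * dψ₄ t j) I t := by
      have h0 := ((hd₄ t ht).inner ℝ (hd₄ t ht)).const_mul ((1/2 : ℝ) * μ)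
      have hcomm : (inner ℝ (dψ₄ t) (ψ₄ t) : ℝ) = inner ℝ (ψ₄ t) (dψ₄ t) :=
        real_inner_comm _ _
      rw [hcomm] at h0
      refine h0.congr_deriv ?_
      rw [inner_tsum]
      ring
    have hG := ((h1.add h2).add h3).add h4
    have hfun : ∀ s : ℝ, (∑' j : ℤ,
        ((V (Rt s j + ψ₁ s j) - V (Rt s j) - deriv V (Rt s j) * ψ₁ s j)
          + 1 / 2 * (ψ₂ s j) ^ 2 + 1 / 2 * κ * (ψ₃ s j) ^ 2 + 1 / 2 * μ * (ψ₄ s j) ^ 2))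
        = (fun s => (((∑' j, MEE.FF V (Rt s j) (ψ₁ s j))
            + (1/2 : ℝ) * (inner ℝ (ψ₂ s) (ψ₂ s) : ℝ))
            + (1/2 : ℝ) * κ * (inner ℝ (ψ₃ s) (ψ₃ s) : ℝ))
            + (1/2 : ℝ) * μ * (inner ℝ (ψ₄ s) (ψ₄ s) : ℝ)) s := by
      intro s
      have S1 : Summable fun j => MEE.FF V (Rt s j) (ψ₁ s j) := MEE.summable_FF hV _ _
      have S2 : Summable fun j => (1/2 : ℝ) * ψ₂ s j ^ 2 :=
        (MEE.l2_summable_sq (ψ₂ s)).mul_left _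
      have S3 : Summable fun j => (1/2 : ℝ) * κ * ψ₃ s j ^ 2 :=
        (MEE.l2_summable_sq (ψ₃ s)).mul_left _
      have S4 : Summable fun j => (1/2 : ℝ) * μ * ψ₄ s j ^ 2 :=
        (MEE.l2_summable_sq (ψ₄ s)).mul_left _
      have hsp : ∑' j, (MEE.FF V (Rt s j) (ψ₁ s j) + 1/2 * ψ₂ s j ^ 2
            + 1/2 * κ * ψ₃ s j ^ 2 + 1/2 * μ * ψ₄ s j ^ 2)
          = (∑' j, MEE.FF V (Rt s j) (ψ₁ s j)) + (∑' j, (1/2 : ℝ) * ψ₂ s j ^ 2)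
            + (∑' j, (1/2 : ℝ) * κ * ψ₃ s j ^ 2) + (∑' j, (1/2 : ℝ) * μ * ψ₄ s j ^ 2) := by
        rw [Summable.tsum_add ((S1.add S2).add S3) S4, Summable.tsum_add (S1.add S2) S3, Summable.tsum_add S1 S2]
      have hn2 : (∑' j, (1/2 : ℝ) * ψ₂ s j ^ 2) = 1/2 * (inner ℝ (ψ₂ s) (ψ₂ s) : ℝ) := by
        rw [tsum_mul_left, ← MEE.l2_norm_sq, real_inner_self_eq_norm_sq]
      have hn3 : (∑' j, (1/2 : ℝ) * κ * ψ₃ s j ^ 2) = 1/2 * κ * (inner ℝ (ψ₃ s) (ψ₃ s) : ℝ) := by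
        rw [tsum_mul_left, ← MEE.l2_norm_sq, real_inner_self_eq_norm_sq]
      have hn4 : (∑' j, (1/2 : ℝ) * μ * ψ₄ s j ^ 2) = 1/2 * μ * (inner ℝ (ψ₄ s) (ψ₄ s) : ℝ) := by
        rw [tsum_mul_left, ← MEE.l2_norm_sq, real_inner_self_eq_norm_sq]
      rw [hn2, hn3, hn4] at hsp
      simpa [MEE.FF] using hsp
    exact hG.congr (fun s _ => hfun s) (hfun t)
  · -- the bound on E'
    have sψ₂ := MEE.l2_summable_sq (ψ₂ t)
    have sψ₃ := MEE.l2_summable_sq (ψ₃ t)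
    have sψ₄ := MEE.l2_summable_sq (ψ₄ t)
    have sR₁ := MEE.l2_summable_sq (Res₁ t)
    have sR₂ := MEE.l2_summable_sq (Res₂ t)
    have sR₃ := MEE.l2_summable_sq (Res₃ t)
    have sR₄ := MEE.l2_summable_sq (Res₄ t)
    have sashift : Summable fun j => a (j - 1) ^ 2 := by
      have h := ((Equiv.subRight (1:ℤ)).summable_iff (f := fun j => a j ^ 2)).mpr ha_sq
      simpa [Function.comp_def] using h
    have sψ₂shift : Summable fun j => ψ₂ t (j + 1) ^ 2 := by
      have h := ((Equiv.addRight (1:ℤ)).summable_iff (f := fun j => ψ₂ t j ^ 2)).mpr sψ₂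
      simpa [Function.comp_def] using h
    have P1 : Summable fun j => a j * ψ₂ t (j + 1) := MEE.summable_mul ha_sq sψ₂shift
    have P2 : Summable fun j => a j * ψ₂ t j := MEE.summable_mul ha_sq sψ₂
    have P3 : Summable fun j => a j * Res₁ t j := MEE.summable_mul ha_sq sR₁
    have P2' : Summable fun j => ψ₂ t j * a j := MEE.summable_mul sψ₂ ha_sq
    have P4 : Summable fun j => ψ₂ t j * a (j - 1) := MEE.summable_mul sψ₂ sashift
    have P5 : Summable fun j => ψ₂ t j * ψ₃ t j := MEE.summable_mul sψ₂ sψ₃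
    have P6 : Summable fun j => ψ₂ t j * Res₂ t j := MEE.summable_mul sψ₂ sR₂
    have P7 : Summable fun j => ψ₃ t j * ψ₄ t j := MEE.summable_mul sψ₃ sψ₄
    have P8 : Summable fun j => ψ₃ t j * ψ₂ t j := MEE.summable_mul sψ₃ sψ₂
    have P9 : Summable fun j => ψ₃ t j * Res₃ t j := MEE.summable_mul sψ₃ sR₃
    have P10 : Summable fun j => ψ₄ t j * ψ₃ t j := MEE.summable_mul sψ₄ sψ₃
    have P11 : Summable fun j => ψ₄ t j * Res₄ t j := MEE.summable_mul sψ₄ sR₄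
    have P12 : Summable fun j => c j * Rt' t j :=
      MEE.summable_mul hc_sq (MEE.l2_summable_sq (Rt' t))
    have P13 : Summable fun j => a j * dψ₁ t j :=
      MEE.summable_mul ha_sq (MEE.l2_summable_sq (dψ₁ t))
    have hDsplit : DΦ = (∑' j, c j * Rt' t j) + ∑' j, a j * dψ₁ t j := by
      rw [hDΦ, Summable.tsum_add P12 P13]
    have E1 : ∑' j, a j * dψ₁ t j
        = (∑' j, a j * ψ₂ t (j + 1)) - (∑' j, a j * ψ₂ t j) + ∑' j, a j * Res₁ t j := by
      rw [← Summable.tsum_sub P1 P2, ← Summable.tsum_add (P1.sub P2) P3]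
      exact tsum_congr fun j => by rw [heq₁ t ht j]; ring
    have hashift : ∀ j : ℤ, a (j - 1)
        = deriv V (Rt t (j-1) + ψ₁ t (j-1)) - deriv V (Rt t (j-1)) := fun j => rfl
    have E2 : ∑' j, ψ₂ t j * dψ₂ t j
        = ((∑' j, ψ₂ t j * a j) - ∑' j, ψ₂ t j * a (j - 1))
          + (κ * (∑' j, ψ₂ t j * ψ₃ t j) + ∑' j, ψ₂ t j * Res₂ t j) := by
      rw [← Summable.tsum_sub P2' P4, ← tsum_mul_left, ← Summable.tsum_add (P5.mul_left κ) P6,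
        ← Summable.tsum_add (P2'.sub P4) ((P5.mul_left κ).add P6)]
      refine tsum_congr fun j => ?_
      rw [heq₂ t ht j, hashift j]
      simp only [ha, MEE.Fb]
      ring
    have E3 : ∑' j, ψ₃ t j * dψ₃ t j
        = ((∑' j, ψ₃ t j * ψ₄ t j) - ∑' j, ψ₃ t j * ψ₂ t j) + ∑' j, ψ₃ t j * Res₃ t j := by
      rw [← Summable.tsum_sub P7 P8, ← Summable.tsum_add (P7.sub P8) P9]
      exact tsum_congr fun j => by rw [heq₃ t ht j]; ring
    have E4 : μ * ∑' j, ψ₄ t j * dψ₄ t j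
        = -(κ * ∑' j, ψ₄ t j * ψ₃ t j) + ∑' j, ψ₄ t j * Res₄ t j := by
      rw [← tsum_mul_left, ← tsum_mul_left (a := κ), ← tsum_neg,
        ← Summable.tsum_add ((P10.mul_left κ).neg) P11]
      refine tsum_congr fun j => ?_
      have h := heq₄ t ht j
      have hmm : μ * (ψ₄ t j * dψ₄ t j) = ψ₄ t j * (μ * dψ₄ t j) := by ring
      rw [hmm, h]
      ring
    have Eshift : (∑' j, a j * ψ₂ t (j + 1)) = ∑' j, ψ₂ t j * a (j - 1) := by
      have h := (Equiv.addRight (1:ℤ)).tsum_eq (f := fun j => ψ₂ t j * a (j - 1))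
      rw [← h]
      refine tsum_congr fun j => ?_
      simp only [Equiv.coe_addRight, add_sub_cancel_right]
      ring
    have E5 : ∑' j, ψ₂ t j * ψ₃ t j = ∑' j, ψ₃ t j * ψ₂ t j :=
      tsum_congr fun j => mul_comm _ _
    have E6 : ∑' j, ψ₃ t j * ψ₄ t j = ∑' j, ψ₄ t j * ψ₃ t j :=
      tsum_congr fun j => mul_comm _ _
    have E2'' : ∑' j, ψ₂ t j * a j = ∑' j, a j * ψ₂ t j :=
      tsum_congr fun j => mul_comm _ _
    have hE'val : E' = (∑' j, c j * Rt' t j) + ((∑' j, a j * Res₁ t j)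
        + (∑' j, ψ₂ t j * Res₂ t j) + κ * (∑' j, ψ₃ t j * Res₃ t j)
        + ∑' j, ψ₄ t j * Res₄ t j) := by
      rw [hE', hDsplit, E1, E2, E3, E4, Eshift, E5, E6, E2'']
      ring
    -- rewrite the goal's sums in terms of a, c
    have eqSA : (∑' j : ℤ, (deriv V (Rt t j + ψ₁ t j) - deriv V (Rt t j)) ^ 2)
        = ∑' j, a j ^ 2 := tsum_congr fun j => by simp only [ha, MEE.Fb]
    have eqC : (∑' j : ℤ, |(deriv V (Rt t j + ψ₁ t j) - deriv V (Rt t j)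
          - deriv (deriv V) (Rt t j) * ψ₁ t j) * Rt' t j|)
        = ∑' j, |c j * Rt' t j| := tsum_congr fun j => by simp only [hc, MEE.Fa]
    rw [hE'val, eqSA, eqC]
    -- Cauchy–Schwarz bounds
    have normsqrt : ∀ f : L2Z, Real.sqrt (∑' j, (f j) ^ 2) = ‖f‖ := fun f => by
      rw [← MEE.l2_norm_sq]; exact Real.sqrt_sq (norm_nonneg f)
    have CS : ∀ (u : ℤ → ℝ), (Summable fun j => u j ^ 2) → ∀ g : L2Z,
        ∑' j, u j * g j ≤ Real.sqrt (∑' j, u j ^ 2) * ‖g‖ := by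
      intro u hu g
      have h1 : ∑' j, u j * g j ≤ ∑' j, |u j * g j| :=
        Summable.tsum_le_tsum (fun j => le_abs_self _) (MEE.summable_mul hu (MEE.l2_summable_sq g))
          (MEE.summable_abs_mul hu (MEE.l2_summable_sq g))
      have h2 := MEE.tsum_abs_mul_le hu (MEE.l2_summable_sq g)
      rw [normsqrt g] at h2
      linarith
    have habs_cr : ∑' j, c j * Rt' t j ≤ ∑' j, |c j * Rt' t j| :=
      Summable.tsum_le_tsum (fun j => le_abs_self _) P12
        (MEE.summable_abs_mul hc_sq (MEE.l2_summable_sq (Rt' t)))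
    set A : ℝ := Real.sqrt (∑' j, a j ^ 2) with hA
    have SAnn : (0:ℝ) ≤ ∑' j, a j ^ 2 := tsum_nonneg fun j => sq_nonneg _
    have hA2 : A ^ 2 = ∑' j, a j ^ 2 := Real.sq_sqrt SAnn
    have hA0 : 0 ≤ A := Real.sqrt_nonneg _
    have B1 : ∑' j, a j * Res₁ t j ≤ A * ‖Res₁ t‖ := CS a ha_sq (Res₁ t)
    have B2 : ∑' j, ψ₂ t j * Res₂ t j ≤ ‖ψ₂ t‖ * ‖Res₂ t‖ := by
      have h := CS (fun j => ψ₂ t j) sψ₂ (Res₂ t)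
      rwa [normsqrt (ψ₂ t)] at h
    have B3 : κ * (∑' j, ψ₃ t j * Res₃ t j) ≤ κ * (‖ψ₃ t‖ * ‖Res₃ t‖) := by
      have h := CS (fun j => ψ₃ t j) sψ₃ (Res₃ t)
      rw [normsqrt (ψ₃ t)] at h
      exact mul_le_mul_of_nonneg_left h hκ.le
    have B4 : ∑' j, ψ₄ t j * Res₄ t j ≤ ‖ψ₄ t‖ * ‖Res₄ t‖ := by
      have h := CS (fun j => ψ₄ t j) sψ₄ (Res₄ t)
      rwa [normsqrt (ψ₄ t)] at h
    -- residual smallness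
    have hXnn : (0:ℝ) ≤ ‖Res₁ t‖ ^ 2 + ‖Res₂ t‖ ^ 2 + ‖Res₃ t‖ ^ 2
        + (1 / μ) * ‖Res₄ t‖ ^ 2 := by positivity
    have hX : ‖Res₁ t‖ ^ 2 + ‖Res₂ t‖ ^ 2 + ‖Res₃ t‖ ^ 2 + (1 / μ) * ‖Res₄ t‖ ^ 2
        ≤ (C₀ * μ ^ N) ^ 2 := by
      have h := hres t ht
      nlinarith [Real.sq_sqrt hXnn, Real.sqrt_nonneg (‖Res₁ t‖ ^ 2 + ‖Res₂ t‖ ^ 2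
        + ‖Res₃ t‖ ^ 2 + (1 / μ) * ‖Res₄ t‖ ^ 2)]
    have hpow : μ ^ (2 * N) = μ ^ N * μ ^ N := by
      rw [two_mul, Real.rpow_add hμ]
    -- AM–GM for the μ-weighted term
    have h4 : 2 * (‖ψ₄ t‖ * ‖Res₄ t‖) ≤ μ * ‖ψ₄ t‖ ^ 2 + (1 / μ) * ‖Res₄ t‖ ^ 2 := by
      have hnn := div_nonneg (sq_nonneg (μ * ‖ψ₄ t‖ - ‖Res₄ t‖)) hμ.le
      have hexp : (μ * ‖ψ₄ t‖ - ‖Res₄ t‖) ^ 2 / μ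
          = μ * ‖ψ₄ t‖ ^ 2 - 2 * (‖ψ₄ t‖ * ‖Res₄ t‖) + (1 / μ) * ‖Res₄ t‖ ^ 2 := by
        field_simp
        ring
      rw [hexp] at hnn
      linarith
    -- final arithmetic
    have final := MEE.arith_final (A := A) (SA := ∑' j, a j ^ 2) (B := ‖ψ₂ t‖)
      (C' := ‖ψ₃ t‖) (D := ‖ψ₄ t‖) (P1 := ‖Res₁ t‖) (P2 := ‖Res₂ t‖) (P3 := ‖Res₃ t‖)
      (P4 := ‖Res₄ t‖) (q := C₀ * μ ^ N) hA2 hκ hμ hX B1 B2 B3 B4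
    have hq : 1 / 2 * (C₀ * μ ^ N) ^ 2 = 1 / 2 * C₀ ^ 2 * μ ^ (2 * N) := by
      rw [hpow]
      ring
    rw [hq] at final
    linarith [habs_cr, final]
end
end

section
/- Suppose f : ℝ → ℂ is C^{n+1} and ω ≠ 0 is real. Then for all t ∈ ℝ: ∫₀ᵗ e^{iω(t−t')} f(t') dt' = (i/ω) Σ_{j=0}^{n} (−i/ω)^j f^{(j)}(t) − (i e^{iωt}/ω) Σ_{j=0}^{n} (−i/ω)^j f^{(j)}(0) + (−i/ω)^{n+1} ∫₀ᵗ e^{iω(t−t')} f^{(n+1)}(t') dt'. -/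
noncomputable section

open Complex intervalIntegral in
lemma osc_step (ω : ℝ) (hω : ω ≠ 0) (g : ℝ → ℂ) (hg : Differentiable ℝ g)
    (hg' : Continuous (deriv g)) (t : ℝ) :
    (∫ s in (0 : ℝ)..t, Complex.exp (Complex.I * ω * (t - s)) * g s) =
      (Complex.I / ω) * g t - (Complex.I * Complex.exp (Complex.I * ω * t) / ω) * g 0
      + (-Complex.I / ω) *
          ∫ s in (0 : ℝ)..t, Complex.exp (Complex.I * ω * (t - s)) * deriv g s := by
  have hω' : (ω : ℂ) ≠ 0 := Complex.ofReal_ne_zero.mpr hω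
  set v : ℝ → ℂ := fun s => (Complex.I / ω) * Complex.exp (Complex.I * ω * (t - s)) with hv
  have hvderiv : ∀ s : ℝ, HasDerivAt v (Complex.exp (Complex.I * ω * (t - s))) s := by
    intro s
    have h1 : HasDerivAt (fun w : ℂ => (Complex.I / ω) * Complex.exp (Complex.I * ω * (t - w)))
        ((Complex.I / ω) * (Complex.exp (Complex.I * ω * (t - (s : ℂ))) * -(Complex.I * ω)))
        (s : ℂ) := by
      have := (((hasDerivAt_id (s : ℂ)).const_sub (t : ℂ)).const_mul
        (Complex.I * ω)).cexp.const_mul (Complex.I / ω)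
      simpa using this
    have h2 := h1.comp_ofReal
    convert h2 using 1
    field_simp
    linear_combination Complex.I_mul_I
  have hexpcont : Continuous fun s : ℝ => Complex.exp (Complex.I * ω * (t - s)) := by
    continuity
  have key := integral_mul_deriv_eq_deriv_mul
    (u := g) (v := v) (u' := deriv g)
    (v' := fun s => Complex.exp (Complex.I * ω * (t - s)))
    (fun x _ => (hg x).hasDerivAt) (fun x _ => hvderiv x)
    (hg'.intervalIntegrable 0 t) (hexpcont.intervalIntegrable 0 t)
  have hvt : v t = Complex.I / ω := by simp [hv]
  have hv0 : v 0 = (Complex.I / ω) * Complex.exp (Complex.I * ω * t) := by simp [hv]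
  calc (∫ s in (0 : ℝ)..t, Complex.exp (Complex.I * ω * (t - s)) * g s)
      = ∫ s in (0 : ℝ)..t, g s * Complex.exp (Complex.I * ω * (t - s)) := by
        simp_rw [mul_comm]
    _ = g t * v t - g 0 * v 0 - ∫ s in (0 : ℝ)..t, deriv g s * v s := key
    _ = (Complex.I / ω) * g t - (Complex.I * Complex.exp (Complex.I * ω * t) / ω) * g 0
        + (-Complex.I / ω) *
          ∫ s in (0 : ℝ)..t, Complex.exp (Complex.I * ω * (t - s)) * deriv g s := by
        rw [hvt, hv0]
        rw [show (∫ s in (0 : ℝ)..t, deriv g s * v s)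
            = (Complex.I / ω) * ∫ s in (0 : ℝ)..t,
                Complex.exp (Complex.I * ω * (t - s)) * deriv g s by
          rw [← intervalIntegral.integral_const_mul]
          congr 1; ext s; simp only [hv]; ring]
        ring

open Complex in
/-- Repeated integration by parts for oscillatory integrals: for `f : ℝ → ℂ` of class
`C^{n+1}` and real `ω ≠ 0`,
`∫₀ᵗ e^{iω(t−t')} f(t') dt' = (i/ω) Σ_{j=0}^{n} (−i/ω)^j f^{(j)}(t)
  − (i e^{iωt}/ω) Σ_{j=0}^{n} (−i/ω)^j f^{(j)}(0)
  + (−i/ω)^{n+1} ∫₀ᵗ e^{iω(t−t')} f^{(n+1)}(t') dt'`. -/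
theorem oscillatory_integration_by_parts
    (n : ℕ) (ω : ℝ) (hω : ω ≠ 0) (f : ℝ → ℂ) (hf : ContDiff ℝ (↑(n + 1) : ℕ∞) f) :
    ∀ t : ℝ,
      (∫ s in (0 : ℝ)..t, Complex.exp (Complex.I * ω * (t - s)) * f s) =
        (Complex.I / ω) *
            ∑ j ∈ Finset.range (n + 1), (-Complex.I / ω) ^ j * iteratedDeriv j f t
        - (Complex.I * Complex.exp (Complex.I * ω * t) / ω) *
            ∑ j ∈ Finset.range (n + 1), (-Complex.I / ω) ^ j * iteratedDeriv j f 0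
        + (-Complex.I / ω) ^ (n + 1) *
            ∫ s in (0 : ℝ)..t, Complex.exp (Complex.I * ω * (t - s)) *
              iteratedDeriv (n + 1) f s := by
  induction n with
  | zero =>
    intro t
    have h1 : ContDiff ℝ 1 f := by exact_mod_cast hf
    obtain ⟨hd, hc⟩ := contDiff_one_iff_deriv.mp h1
    have := osc_step ω hω f hd hc t
    simpa [Finset.sum_range_one] using this
  | succ n ih =>
    intro t
    have hf' : ContDiff ℝ (↑(n + 1) : ℕ∞) f := hf.of_le (by exact_mod_cast Nat.le_succ (n + 1))
    have h1 : ContDiff ℝ 1 (iteratedDeriv (n + 1) f) := by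
      rw [contDiff_one_iff_deriv]
      have h := contDiff_iff_iteratedDeriv.mp (show ContDiff ℝ (↑(n + 2) : ℕ∞) f from hf)
      refine ⟨h.2 (n + 1) (by exact_mod_cast Nat.lt_succ_self (n + 1)), ?_⟩
      rw [← iteratedDeriv_succ]
      exact h.1 (n + 2) le_rfl
    obtain ⟨hd, hc⟩ := contDiff_one_iff_deriv.mp h1
    have hstep := osc_step ω hω (iteratedDeriv (n + 1) f) hd hc t
    rw [← iteratedDeriv_succ] at hstep
    rw [ih hf' t, hstep,
      Finset.sum_range_succ (fun j => (-Complex.I / ω) ^ j * iteratedDeriv j f t) (n + 1),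
      Finset.sum_range_succ (fun j => (-Complex.I / ω) ^ j * iteratedDeriv j f 0) (n + 1)]
    ring
end
end

section
/- Let κ > 0, K_* > 0, T_* > 0 and let V : ℝ → ℝ be smooth with V(0) = V'(0) = 0 and V''(0) =: k > 0. Then there exist ρ_* = ρ_*(V) > 0, μ_* = μ_*(K_*,T_*,κ,V) > 0 and C_* = C_*(K_*,T_*,κ,V) > 0 such that for all μ ∈ (0,μ_*]: if (R̃,P̃) solves the FPUT system Ṙ̃ = δ⁺P̃, Ṗ̃ = δ⁻[V'(R̃)] with ‖R̃(0)‖ + ‖P̃(0)‖ ≤ ρ_*, and (r̃,p̃) solves the driven harmonic oscillator system ṙ̃ = p̃ − P̃, μṗ̃ = −κr̃ with initial data satisfying ‖r̃(0)‖ + √μ ‖p̃(0) − P̃(0)‖ ≤ K_*μ, and (R,P,r,p) solves the MiM lattice with ‖(R(0),P(0),r(0),p(0)) − (R̃(0),P̃(0),r̃(0),p̃(0))‖_μ ≤ μ, then ‖(R(t),P(t),r(t),p(t)) − (R̃(t),P̃(t),r̃(t),p̃(t))‖_μ ≤ C_*μ for all t ∈ [−T_*,T_*]. -/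
set_option maxHeartbeats 1000000



noncomputable section

/-- `(R,P,r,p)` is a (C¹) global-in-time solution of the first-order mass-in-mass lattice
`Ṙ = δ⁺P`, `Ṗ = δ⁻[V'(R)] + κ r`, `ṙ = p − P`, `μ ṗ = −κ r`. -/
def IsMiMSolution (V : ℝ → ℝ) (κ μ : ℝ) (R P r p : ℝ → L2Z) : Prop :=
  ∀ t : ℝ, ∃ R' P' r' p' : L2Z,
    HasDerivAt R R' t ∧ HasDerivAt P P' t ∧
    HasDerivAt r r' t ∧ HasDerivAt p p' t ∧
    (∀ j : ℤ, R' j = P t (j + 1) - P t j) ∧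
    (∀ j : ℤ, P' j = (deriv V (R t j) - deriv V (R t (j - 1))) + κ * r t j) ∧
    (∀ j : ℤ, r' j = p t j - P t j) ∧
    (∀ j : ℤ, μ * p' j = -(κ * r t j))

/-- `(R,P)` is a (C¹) global-in-time solution of the monatomic FPUT lattice
`Ṙ = δ⁺P`, `Ṗ = δ⁻[V'(R)]`. -/
def IsFPUTSolution (V : ℝ → ℝ) (R P : ℝ → L2Z) : Prop :=
  ∀ t : ℝ, ∃ R' P' : L2Z,
    HasDerivAt R R' t ∧ HasDerivAt P P' t ∧
    (∀ j : ℤ, R' j = P t (j + 1) - P t j) ∧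
    (∀ j : ℤ, P' j = deriv V (R t j) - deriv V (R t (j - 1)))

/-- `(r,p)` is a (C¹) global-in-time solution of the driven harmonic oscillator system
`ṙ = p − P`, `μ ṗ = −κ r` (driven by a given `P`). -/
def IsDrivenSHOSolution (κ μ : ℝ) (P r p : ℝ → L2Z) : Prop :=
  ∀ t : ℝ, ∃ r' p' : L2Z,
    HasDerivAt r r' t ∧ HasDerivAt p p' t ∧
    (∀ j : ℤ, r' j = p t j - P t j) ∧
    (∀ j : ℤ, μ * p' j = -(κ * r t j))

/-- The norm `‖(R,P,r,p)‖_μ = sqrt( (k/2)‖R‖² + (1/2)‖P‖² + (κ/2)‖r‖² + (μ/2)‖p‖² )`. -/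
def munorm (k κ μ : ℝ) (R P r p : L2Z) : ℝ :=
  Real.sqrt (k / 2 * ‖R‖ ^ 2 + 1 / 2 * ‖P‖ ^ 2 + κ / 2 * ‖r‖ ^ 2 + μ / 2 * ‖p‖ ^ 2)


open Real Set
open scoped RealInnerProductSpace

namespace FA

lemma nsq (x : L2Z) : ‖x‖ ^ 2 = ∑' j, (x j) ^ 2 := by
  have h := lp.norm_rpow_eq_tsum (p := 2) (by norm_num) x
  simp only [ENNReal.toReal_ofNat] at h
  rw [show ((2:ℝ)) = ((2:ℕ):ℝ) by norm_num] at h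
  simp only [Real.rpow_natCast] at h
  simpa [Real.norm_eq_abs, sq_abs] using h

lemma smsq (x : L2Z) : Summable (fun j => (x j) ^ 2) := by
  have h := (lp.memℓp x).summable (p := 2) (by norm_num)
  simp only [ENNReal.toReal_ofNat] at h
  rw [show ((2:ℝ)) = ((2:ℕ):ℝ) by norm_num] at h
  simp only [Real.rpow_natCast] at h
  simpa [Real.norm_eq_abs, sq_abs] using h

lemma tsum_shift' (g : ℤ → ℝ) (c : ℤ) : ∑' j, g (j + c) = ∑' j, g j :=
  (Equiv.addRight c).tsum_eq g

lemma smsq_shift (x : L2Z) (c : ℤ) : Summable (fun j : ℤ => (x (j + c)) ^ 2) := by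
  have h : Summable (fun j : ℤ => ((fun i => (x i) ^ 2) ∘ (Equiv.addRight c)) j) :=
    (Equiv.summable_iff (Equiv.addRight c) (f := fun i => (x i) ^ 2)).2 (smsq x)
  simpa [Function.comp] using h

lemma tsum_shift_sq (x : L2Z) (c : ℤ) : ∑' j : ℤ, (x (j + c)) ^ 2 = ‖x‖ ^ 2 := by
  rw [nsq]; exact tsum_shift' (fun i => (x i) ^ 2) c

lemma apply_le (x : L2Z) (j : ℤ) : |x j| ≤ ‖x‖ := by
  simpa [Real.norm_eq_abs] using lp.norm_apply_le_norm (p := 2) (by norm_num) x j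

/-- workhorse: componentwise square bound with shifts gives norm bound. -/
lemma norm_le_of_sq_le (x y z : L2Z) (a b : ℝ) (c d : ℤ)
    (h : ∀ j, (x j) ^ 2 ≤ a ^ 2 * (y (j + c)) ^ 2 + b ^ 2 * (z (j + d)) ^ 2) :
    ‖x‖ ^ 2 ≤ a ^ 2 * ‖y‖ ^ 2 + b ^ 2 * ‖z‖ ^ 2 := by
  rw [nsq]
  calc ∑' j, (x j) ^ 2 ≤ ∑' j, (a ^ 2 * (y (j + c)) ^ 2 + b ^ 2 * (z (j + d)) ^ 2) := by
        apply Summable.tsum_le_tsum h (smsq x)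
        exact ((smsq_shift y c).mul_left _).add ((smsq_shift z d).mul_left _)
      _ = a ^ 2 * ‖y‖ ^ 2 + b ^ 2 * ‖z‖ ^ 2 := by
        rw [Summable.tsum_add (((smsq_shift y c).mul_left _)) (((smsq_shift z d).mul_left _)),
          tsum_mul_left, tsum_mul_left, tsum_shift_sq, tsum_shift_sq]

/-- abs version -/
lemma norm_le_of_abs_le (x y z : L2Z) (a b : ℝ) (c d : ℤ) (ha : 0 ≤ a) (hb : 0 ≤ b)
    (h : ∀ j, |x j| ≤ a * |y (j + c)| + b * |z (j + d)|) :
    ‖x‖ ≤ 2 * (a * ‖y‖ + b * ‖z‖) := by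
  have h2 : ∀ j, (x j) ^ 2 ≤ ((2*a) ^ 2) * (y (j + c)) ^ 2 + ((2*b) ^ 2) * (z (j + d)) ^ 2 := by
    intro j
    have := h j
    have h1 : |x j| ^ 2 ≤ (a * |y (j + c)| + b * |z (j + d)|) ^ 2 := by
      apply pow_le_pow_left₀ (abs_nonneg _) this
    rw [sq_abs] at h1
    have h3 : (a * |y (j + c)| + b * |z (j + d)|) ^ 2 ≤
        (2*a)^2 * |y (j+c)| ^ 2 + (2*b)^2 * |z (j+d)| ^ 2 := by nlinarith [sq_nonneg (a * |y (j + c)| - b * |z (j + d)|), sq_nonneg (a * |y (j+c)|), sq_nonneg (b * |z (j+d)|)]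
    rw [sq_abs, sq_abs] at h3
    linarith
  have := norm_le_of_sq_le x y z (2*a) (2*b) c d h2
  have hx : ‖x‖ ^ 2 ≤ (2 * (a * ‖y‖ + b * ‖z‖)) ^ 2 := by nlinarith [norm_nonneg y, norm_nonneg z, mul_nonneg (mul_nonneg ha (norm_nonneg y)) (mul_nonneg hb (norm_nonneg z))]
  have h0 : (0:ℝ) ≤ 2 * (a * ‖y‖ + b * ‖z‖) := by positivity
  nlinarith [norm_nonneg x]


lemma gB_le {δ K ε x : ℝ} (hδ : 0 ≤ δ) (hK : 0 ≤ K) (hε : 0 ≤ ε) (hx : 0 ≤ x) :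
    gronwallBound δ K ε x ≤ (δ + ε * x) * exp (K * x) := by
  rcases eq_or_lt_of_le hK with hK0 | hKpos
  · rw [← hK0, gronwallBound_K0]
    simp only [zero_mul, exp_zero, mul_one]
    exact le_refl _
  · rw [gronwallBound_of_K_ne_0 hKpos.ne']
    have h1 : exp (K * x) - 1 ≤ (K * x) * exp (K * x) := by
      have := Real.add_one_le_exp (-(K * x))
      have hpos := Real.exp_pos (K * x)
      have : (1 - K * x) * exp (K * x) ≤ exp (-(K*x)) * exp (K*x) := by
        apply mul_le_mul_of_nonneg_right _ hpos.le
        linarith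
      rw [← Real.exp_add] at this
      simp at this
      nlinarith
    have h2 : ε / K * (exp (K * x) - 1) ≤ ε * x * exp (K * x) := by
      have hKne := hKpos
      calc ε / K * (exp (K * x) - 1) ≤ ε / K * ((K * x) * exp (K * x)) := by
            apply mul_le_mul_of_nonneg_left h1 (by positivity)
          _ = ε * x * exp (K * x) := by field_simp
    nlinarith [Real.exp_pos (K * x)]

/-- One-sided bootstrap Gronwall on `[0,T]`. -/
lemma bootstrap_right {f f' : ℝ → ℝ} {T K ε δ B : ℝ}
    (hT : 0 ≤ T) (hK : 0 ≤ K) (hε : 0 ≤ ε) (hδ : 0 ≤ δ)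
    (hd : ∀ t ∈ Icc 0 T, HasDerivAt f (f' t) t)
    (hb : ∀ t ∈ Icc 0 T, |f t| ≤ B → |f' t| ≤ K * |f t| + ε)
    (h0 : |f 0| ≤ δ)
    (hAB : (δ + ε * T) * exp (K * T) < B) :
    ∀ t ∈ Icc 0 T, |f t| ≤ (δ + ε * T) * exp (K * T) := by
  set A := (δ + ε * T) * exp (K * T) with hA
  have hδA : δ ≤ A := by
    have h1 : (1:ℝ) ≤ exp (K * T) := by
      rw [show (1:ℝ) = exp 0 by simp]; exact exp_le_exp.2 (by positivity)
    nlinarith [mul_nonneg hε hT]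
  -- monotone bound: for 0 ≤ t ≤ T, gronwallBound δ K ε t ≤ A
  have hgA : ∀ t, 0 ≤ t → t ≤ T → gronwallBound δ K ε t ≤ A := by
    intro t ht htT
    refine le_trans (gB_le hδ hK hε ht) ?_
    have h1 : exp (K * t) ≤ exp (K * T) := exp_le_exp.2 (by nlinarith)
    have h2 : δ + ε * t ≤ δ + ε * T := by nlinarith
    have h3 : (0:ℝ) ≤ δ + ε * t := by positivity
    nlinarith [Real.exp_pos (K * t)]
  have hcont : ContinuousOn f (Icc 0 T) := fun t ht => ((hd t ht).continuousAt).continuousWithinAt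
  set Sg := {t | t ∈ Icc 0 T ∧ ∀ s ∈ Icc 0 t, |f s| ≤ A} with hSg
  have h0Sg : (0:ℝ) ∈ Sg := by
    refine ⟨⟨le_refl 0, hT⟩, ?_⟩
    intro s hs
    have : s = 0 := le_antisymm hs.2 hs.1
    rw [this]; exact h0.trans hδA
  have hbdd : BddAbove Sg := ⟨T, fun t ht => ht.1.2⟩
  set c := sSup Sg with hc
  have hcmem : c ∈ Icc 0 T := ⟨le_csSup hbdd h0Sg, csSup_le ⟨0, h0Sg⟩ (fun t ht => ht.1.2)⟩
  have hlt : ∀ s, 0 ≤ s → s < c → |f s| ≤ A := by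
    intro s hs hsc
    obtain ⟨u, huSg, hsu⟩ := exists_lt_of_lt_csSup ⟨0, h0Sg⟩ hsc
    exact huSg.2 s ⟨hs, hsu.le⟩
  have hfc : |f c| ≤ A := by
    rcases eq_or_lt_of_le hcmem.1 with h | h
    · rw [← h]; exact h0.trans hδA
    · -- c > 0 : approach from the left
      have hco : ContinuousAt f c := (hd c hcmem).continuousAt
      have htend : Filter.Tendsto (fun s => |f s|) (nhdsWithin c (Iio c)) (nhds |f c|) :=
        ((continuous_abs.continuousAt.comp hco).continuousWithinAt).tendsto
      refine le_of_tendsto htend ?_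
      filter_upwards [Ioo_mem_nhdsLT_of_mem (show c ∈ Ioc 0 c from ⟨h, le_refl c⟩)] with s hs
      exact hlt s hs.1.le hs.2
  have hcSg : c ∈ Sg := by
    refine ⟨hcmem, fun s hs => ?_⟩
    rcases eq_or_lt_of_le hs.2 with h | h
    · rw [h]; exact hfc
    · exact hlt s hs.1 h
  have hcT : c = T := by
    by_contra hne
    have hcltT : c < T := lt_of_le_of_ne hcmem.2 hne
    -- continuity at c gives η > 0 with |f| ≤ B on [c, c+η]
    have hBc : |f c| < B := lt_of_le_of_lt hfc hAB
    have hev : ∀ᶠ s in nhds c, |f s| < B := by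
      have : ContinuousAt (fun s => |f s|) c :=
        continuous_abs.continuousAt.comp (hd c hcmem).continuousAt
      exact this.eventually_lt_const hBc
    obtain ⟨η, hη, hball⟩ := Metric.eventually_nhds_iff.1 hev
    set u := min (c + η / 2) T with hu
    have hcu : c < u := lt_min (by linarith) hcltT
    have huT : u ≤ T := min_le_right _ _
    have hu0 : 0 ≤ u := le_trans hcmem.1 hcu.le
    have hBound : ∀ s ∈ Icc 0 u, |f s| ≤ B := by
      intro s hs
      rcases le_or_gt s c with h | h
      · exact le_trans (hcSg.2 s ⟨hs.1, h⟩) hAB.le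
      · apply (hball _).le
        rw [Real.dist_eq, abs_of_pos (by linarith)]
        have : s ≤ c + η / 2 := le_trans hs.2 (min_le_left _ _)
        linarith
    -- apply Gronwall on [0, u]
    have hgron := norm_le_gronwallBound_of_norm_deriv_right_le (E := ℝ)
      (f := f) (f' := f') (δ := δ) (K := K) (ε := ε) (a := 0) (b := u)
      (fun t ht => ((hd t ⟨ht.1, le_trans ht.2 huT⟩).continuousAt).continuousWithinAt)
      (fun t ht => ((hd t ⟨ht.1, le_trans ht.2.le huT⟩).hasDerivWithinAt))
      (by simpa using h0)
      (fun t ht => by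
        have htI : t ∈ Icc 0 T := ⟨ht.1, le_trans ht.2.le huT⟩
        simpa [Real.norm_eq_abs] using hb t htI (hBound t ⟨ht.1, ht.2.le⟩))
    have huSg : u ∈ Sg := by
      refine ⟨⟨hu0, huT⟩, fun s hs => ?_⟩
      have := hgron s hs
      simp only [Real.norm_eq_abs, sub_zero] at this
      exact this.trans (hgA s hs.1 (le_trans hs.2 huT))
    have : u ≤ c := le_csSup hbdd huSg
    exact absurd this (not_le.2 hcu)
  intro t ht
  rw [hcT] at hcSg
  exact hcSg.2 t ht

/-- Two-sided bootstrap Gronwall on `[-T,T]`, for globally differentiable `f`. -/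
lemma bootstrap {f f' : ℝ → ℝ} {T K ε δ B : ℝ}
    (hT : 0 ≤ T) (hK : 0 ≤ K) (hε : 0 ≤ ε) (hδ : 0 ≤ δ)
    (hd : ∀ t ∈ Icc (-T) T, HasDerivAt f (f' t) t)
    (hb : ∀ t ∈ Icc (-T) T, |f t| ≤ B → |f' t| ≤ K * |f t| + ε)
    (h0 : |f 0| ≤ δ)
    (hAB : (δ + ε * T) * exp (K * T) < B) :
    ∀ t ∈ Icc (-T) T, |f t| ≤ (δ + ε * T) * exp (K * T) := by
  intro t ht
  rcases le_or_gt 0 t with h | h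
  · refine bootstrap_right hT hK hε hδ
      (fun s hs => hd s ⟨le_trans (by linarith) hs.1, hs.2⟩)
      (fun s hs hB => hb s ⟨le_trans (by linarith) hs.1, hs.2⟩ hB) h0 hAB t ⟨h, ht.2⟩
  · have hd' : ∀ s ∈ Icc 0 T, HasDerivAt (fun u => f (-u)) (-(f' (-s))) s := by
      intro s hs
      have h1 : HasDerivAt f (f' (-s)) (-s) := hd (-s) ⟨by linarith [hs.2], by linarith [hs.1]⟩
      exact (h1.comp s (hasDerivAt_neg s)).congr_deriv (by ring)
    have := bootstrap_right hT hK hε hδ hd'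
      (fun s hs hB => by
        rw [abs_neg]
        exact hb (-s) ⟨by linarith [hs.2], by linarith [hs.1]⟩ hB)
      (by simpa using h0) hAB (-t) ⟨by linarith, by linarith [ht.1]⟩
    simpa using this


lemma exists_lip (V : ℝ → ℝ) (hV : ContDiff ℝ (⊤:ℕ∞) V) (hV1 : deriv V 0 = 0) :
    ∃ L : ℝ, 1 ≤ L ∧
      (∀ x ∈ Icc (-1:ℝ) 1, ∀ y ∈ Icc (-1:ℝ) 1, |deriv V x - deriv V y| ≤ L * |x - y|) ∧
      (∀ x ∈ Icc (-1:ℝ) 1, |deriv V x| ≤ L * |x|) := by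
  have hV' : ContDiff ℝ (⊤:ℕ∞) (deriv V) := (contDiff_infty_iff_deriv.1 hV).2
  have hV'' : Continuous (deriv (deriv V)) :=
    ((contDiff_infty_iff_deriv.1 hV').2).continuous
  obtain ⟨C, hC⟩ := (isCompact_Icc (a := (-1:ℝ)) (b := 1)).exists_bound_of_continuousOn
    (hV''.continuousOn)
  set L := max C 1 with hL
  have hL1 : (1:ℝ) ≤ L := le_max_right _ _
  have hlip : ∀ x ∈ Icc (-1:ℝ) 1, ∀ y ∈ Icc (-1:ℝ) 1, |deriv V x - deriv V y| ≤ L * |x - y| := by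
    intro x hx y hy
    have := (convex_Icc (-1:ℝ) 1).norm_image_sub_le_of_norm_deriv_le
      (f := deriv V) (C := L)
      (fun z _ => (hV'.differentiable (by simp)).differentiableAt)
      (fun z hz => le_trans (hC z hz) (le_max_left _ _)) hy hx
    simpa [Real.norm_eq_abs] using this
  refine ⟨L, hL1, hlip, fun x hx => ?_⟩
  have := hlip x hx 0 (by constructor <;> norm_num)
  simpa [hV1] using this

lemma hd_normsq {F : ℝ → L2Z} {F' : L2Z} {t : ℝ} (a : ℝ) (h : HasDerivAt F F' t) :
    HasDerivAt (fun u => a / 2 * ‖F u‖ ^ 2) (a * ⟪F', F t⟫) t := by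
  have h1 := (h.inner ℝ h).const_mul (a / 2)
  have heq : (fun u => a / 2 * ⟪F u, F u⟫) = fun u => a / 2 * ‖F u‖ ^ 2 := by
    funext u; rw [real_inner_self_eq_norm_sq]
  rw [heq] at h1
  exact h1.congr_deriv (by rw [real_inner_comm (F t) F']; ring)


lemma fput_bound {V : ℝ → ℝ} {L T : ℝ} (hT : 0 < T) (hL1 : 1 ≤ L)
    (hlin : ∀ x ∈ Icc (-1:ℝ) 1, |deriv V x| ≤ L * |x|)
    {Rt Pt : ℝ → L2Z} (hF : IsFPUTSolution V Rt Pt)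
    (h0 : ‖Rt 0‖ + ‖Pt 0‖ ≤ Real.sqrt (exp (-(4 * (1 + L) * T)) / 16)) :
    ∀ t ∈ Icc (-T) T, ‖Rt t‖ ≤ 1/4 ∧ ‖Pt t‖ ≤ 1/4 := by
  set f : ℝ → ℝ := fun u => 1 / 2 * ‖Rt u‖ ^ 2 + 1 / 2 * ‖Pt u‖ ^ 2 with hf
  set K0 : ℝ := 4 * (1 + L) with hK0
  have hK0pos : (0:ℝ) < K0 := by positivity
  have hδpos : (0:ℝ) < exp (-(K0 * T)) / 32 := by positivity
  -- derivative value at t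
  have hder : ∀ t : ℝ, HasDerivAt f (deriv f t) t ∧
      (∀ s ∈ Icc (-(1:ℝ)) 1, True) → True := fun _ _ => trivial
  have key : ∀ t ∈ Icc (-T) T, |f t| ≤
      ((exp (-(K0 * T)) / 32 + 0 * T) * exp (K0 * T)) := by
    apply bootstrap hT.le hK0pos.le le_rfl hδpos.le
        (f' := deriv f) (B := 1/2)
    · -- differentiability
      intro t _
      obtain ⟨R', P', hR, hP, _, _⟩ := hF t
      have hval : HasDerivAt f (1 * ⟪R', Rt t⟫ + 1 * ⟪P', Pt t⟫) t :=
        (hd_normsq 1 hR).add (hd_normsq 1 hP)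
      rw [hval.deriv]; exact hval
    · -- derivative bound under bootstrap hypothesis
      intro t _ hB
      obtain ⟨R', P', hR, hP, eR, eP⟩ := hF t
      have hval : HasDerivAt f (1 * ⟪R', Rt t⟫ + 1 * ⟪P', Pt t⟫) t :=
        (hd_normsq 1 hR).add (hd_normsq 1 hP)
      rw [hval.deriv]
      have hRtle : ‖Rt t‖ ≤ 1 := by
        have h1 : 1/2 * ‖Rt t‖^2 ≤ |f t| := by
          have : 1/2 * ‖Rt t‖^2 ≤ f t := by
            have := sq_nonneg ‖Pt t‖; simp only [hf]; nlinarith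
          exact this.trans (le_abs_self _)
        nlinarith [norm_nonneg (Rt t)]
      have hRinf : ∀ j, Rt t j ∈ Icc (-1:ℝ) 1 := by
        intro j
        have := (apply_le (Rt t) j).trans hRtle
        constructor <;> [linarith [neg_abs_le (Rt t j)]; linarith [le_abs_self (Rt t j)]]
      have hR'n : ‖R'‖ ≤ 4 * ‖Pt t‖ := by
        have := norm_le_of_abs_le R' (Pt t) (Pt t) 1 1 1 0 zero_le_one zero_le_one (fun j => by
          rw [eR j]
          simp only [one_mul, add_zero]
          exact (abs_sub _ _).trans (by simp) )
        linarith
      have hP'n : ‖P'‖ ≤ 4 * (L * ‖Rt t‖) := by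
        have := norm_le_of_abs_le P' (Rt t) (Rt t) L L 0 (-1) (by linarith) (by linarith)
          (fun j => by
            rw [eP j]
            have h1 : |deriv V (Rt t j)| ≤ L * |Rt t j| := hlin _ (hRinf j)
            have h2 : |deriv V (Rt t (j-1))| ≤ L * |Rt t (j-1)| := hlin _ (hRinf (j-1))
            have h3 : j + (-1) = j - 1 := by ring
            rw [add_zero, h3]
            calc |deriv V (Rt t j) - deriv V (Rt t (j - 1))|
                ≤ |deriv V (Rt t j)| + |deriv V (Rt t (j-1))| := abs_sub _ _
              _ ≤ L * |Rt t j| + L * |Rt t (j-1)| := by linarith)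
        linarith
      have hi1 : |⟪R', Rt t⟫| ≤ 4 * ‖Pt t‖ * ‖Rt t‖ := by
        calc |⟪R', Rt t⟫| ≤ ‖R'‖ * ‖Rt t‖ := abs_real_inner_le_norm _ _
          _ ≤ 4 * ‖Pt t‖ * ‖Rt t‖ := by
              apply mul_le_mul_of_nonneg_right hR'n (norm_nonneg _)
      have hi2 : |⟪P', Pt t⟫| ≤ 4 * L * ‖Rt t‖ * ‖Pt t‖ := by
        calc |⟪P', Pt t⟫| ≤ ‖P'‖ * ‖Pt t‖ := abs_real_inner_le_norm _ _
          _ ≤ 4 * L * ‖Rt t‖ * ‖Pt t‖ := by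
              apply mul_le_mul_of_nonneg_right _ (norm_nonneg _); linarith
      have habsf : 1/2 * ‖Rt t‖^2 + 1/2 * ‖Pt t‖^2 ≤ |f t| := le_abs_self _
      calc |1 * ⟪R', Rt t⟫ + 1 * ⟪P', Pt t⟫| ≤ |⟪R', Rt t⟫| + |⟪P', Pt t⟫| := by
            simpa using abs_add_le _ _
        _ ≤ 4 * ‖Pt t‖ * ‖Rt t‖ + 4 * L * ‖Rt t‖ * ‖Pt t‖ := by linarith
        _ ≤ K0 * |f t| + 0 := by
            have h2 : 2 * (‖Rt t‖ * ‖Pt t‖) ≤ ‖Rt t‖^2 + ‖Pt t‖^2 := by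
              nlinarith [sq_nonneg (‖Rt t‖ - ‖Pt t‖)]
            nlinarith [mul_nonneg (norm_nonneg (Rt t)) (norm_nonneg (Pt t)), hL1]
    · -- initial bound
      have h1 : 0 ≤ ‖Rt 0‖ := norm_nonneg _
      have h2 : 0 ≤ ‖Pt 0‖ := norm_nonneg _
      have hsq : (‖Rt 0‖ + ‖Pt 0‖)^2 ≤ exp (-(K0 * T)) / 16 := by
        have hx : Real.sqrt (exp (-(4 * (1 + L) * T)) / 16) ^ 2 = exp (-(K0 * T)) / 16 := by
          rw [Real.sq_sqrt (by positivity)]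
        rw [← hx]
        apply pow_le_pow_left₀ (by positivity) h0
      have : f 0 = 1/2 * ‖Rt 0‖^2 + 1/2 * ‖Pt 0‖^2 := rfl
      rw [abs_of_nonneg (by positivity : (0:ℝ) ≤ f 0), this]
      nlinarith [mul_nonneg h1 h2]
    · -- smallness
      rw [zero_mul, add_zero, div_mul_eq_mul_div, ← Real.exp_add]
      norm_num
  intro t ht
  have h1 := key t ht
  rw [zero_mul, add_zero, div_mul_eq_mul_div, ← Real.exp_add, neg_add_cancel, Real.exp_zero] at h1
  have h2 : f t ≤ 1/32 := (le_abs_self _).trans (by linarith)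
  have h3 : 0 ≤ 1/2 * ‖Rt t‖^2 := by positivity
  have h4 : 0 ≤ 1/2 * ‖Pt t‖^2 := by positivity
  have h5 : f t = 1/2 * ‖Rt t‖^2 + 1/2 * ‖Pt t‖^2 := rfl
  constructor
  · nlinarith [norm_nonneg (Rt t)]
  · nlinarith [norm_nonneg (Pt t)]


/-- Step 2: uniform bound on `‖pt t‖` for the driven SHO. -/
lemma sho_bound {V : ℝ → ℝ} {κ K L T μ : ℝ} (hκ : 0 < κ) (hK : 0 < K) (hT : 0 < T)
    (hL1 : 1 ≤ L) (hμ : 0 < μ) (hμ1 : μ ≤ 1)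
    (hlin : ∀ x ∈ Icc (-1:ℝ) 1, |deriv V x| ≤ L * |x|)
    {Rt Pt rt pt : ℝ → L2Z} (hF : IsFPUTSolution V Rt Pt)
    (hFb : ∀ t ∈ Icc (-T) T, ‖Rt t‖ ≤ 1/4 ∧ ‖Pt t‖ ≤ 1/4)
    (hS : IsDrivenSHOSolution κ μ Pt rt pt)
    (h0 : ‖rt 0‖ + Real.sqrt μ * ‖pt 0 - Pt 0‖ ≤ K * μ) :
    ∀ t ∈ Icc (-T) T,
      ‖pt t‖ ≤ 1 + Real.sqrt (2 * (((κ+1)/2 * K^2 + L^2 * T / 2 + 1) * exp T)) := by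
  set C4 : ℝ := ((κ+1)/2 * K^2 + L^2 * T / 2 + 1) * exp T with hC4
  have hC4pos : 0 < C4 := by positivity
  set f : ℝ → ℝ := fun u => κ / 2 * ‖rt u‖ ^ 2 + μ / 2 * ‖pt u - Pt u‖ ^ 2 with hf
  set δ2 : ℝ := (κ+1)/2 * K^2 * μ^2 with hδ2
  set ε2 : ℝ := L^2 * μ / 2 with hε2
  have hδ2pos : 0 ≤ δ2 := by positivity
  have hε2pos : 0 ≤ ε2 := by positivity
  -- derivative formula
  have hval : ∀ t ∈ Icc (-T) T, ∃ v : ℝ, HasDerivAt f v t ∧ |v| ≤ |f t| + ε2 := by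
    intro t ht
    obtain ⟨R', P', hR, hP, eR, eP⟩ := hF t
    obtain ⟨r', p', hr, hp, er, ep⟩ := hS t
    refine ⟨κ * ⟪r', rt t⟫ + μ * ⟪p' - P', pt t - Pt t⟫,
      (hd_normsq κ hr).add (hd_normsq μ (hp.sub hP)), ?_⟩
    -- identities
    have hid1 : r' = pt t - Pt t := by
      apply lp.ext; funext j
      rw [lp.coeFn_sub]; simp only [Pi.sub_apply]; exact er j
    have hid2 : μ • p' = (-κ) • rt t := by
      apply lp.ext; funext j
      rw [lp.coeFn_smul, lp.coeFn_smul]; simp only [Pi.smul_apply, smul_eq_mul]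
      rw [ep j]; ring
    have hsimp : κ * ⟪r', rt t⟫ + μ * ⟪p' - P', pt t - Pt t⟫
        = -(μ * ⟪P', pt t - Pt t⟫) := by
      rw [inner_sub_left]
      have h1 : μ * ⟪p', pt t - Pt t⟫ = ⟪μ • p', pt t - Pt t⟫ := (real_inner_smul_left _ _ _).symm
      have h2 : ⟪((-κ) • rt t : L2Z), pt t - Pt t⟫ = -κ * ⟪rt t, pt t - Pt t⟫ :=
        real_inner_smul_left _ _ _
      rw [mul_sub, h1, hid2, h2, hid1, real_inner_comm (pt t - Pt t) (rt t)]
      ring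
    rw [hsimp]
    -- bound
    have hP'n : ‖P'‖ ≤ L := by
      have hRtle : ‖Rt t‖ ≤ 1/4 := (hFb t ht).1
      have hRinf : ∀ j, Rt t j ∈ Icc (-1:ℝ) 1 := by
        intro j
        have := (apply_le (Rt t) j).trans hRtle
        constructor <;> [linarith [neg_abs_le (Rt t j)]; linarith [le_abs_self (Rt t j)]]
      have := norm_le_of_abs_le P' (Rt t) (Rt t) L L 0 (-1) (by linarith) (by linarith)
        (fun j => by
          rw [eP j]
          have h1 : |deriv V (Rt t j)| ≤ L * |Rt t j| := hlin _ (hRinf j)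
          have h2 : |deriv V (Rt t (j-1))| ≤ L * |Rt t (j-1)| := hlin _ (hRinf (j-1))
          have h3 : j + (-1) = j - 1 := by ring
          rw [add_zero, h3]
          calc |deriv V (Rt t j) - deriv V (Rt t (j - 1))|
              ≤ |deriv V (Rt t j)| + |deriv V (Rt t (j-1))| := abs_sub _ _
            _ ≤ L * |Rt t j| + L * |Rt t (j-1)| := by linarith)
      calc ‖P'‖ ≤ 2 * (L * ‖Rt t‖ + L * ‖Rt t‖) := this
        _ ≤ 2 * (L * (1/4) + L * (1/4)) := by
            have := (hFb t ht).1
            have hL0 : 0 < L := by linarith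
            nlinarith
        _ = L := by ring
    have habs : |(-(μ * ⟪P', pt t - Pt t⟫))| ≤ μ * (L * ‖pt t - Pt t‖) := by
      rw [abs_neg, abs_mul, abs_of_pos hμ]
      apply mul_le_mul_of_nonneg_left _ hμ.le
      calc |⟪P', pt t - Pt t⟫| ≤ ‖P'‖ * ‖pt t - Pt t‖ := abs_real_inner_le_norm _ _
        _ ≤ L * ‖pt t - Pt t‖ := mul_le_mul_of_nonneg_right hP'n (norm_nonneg _)
    refine habs.trans ?_
    -- AM-GM : μ L x ≤ f + L² μ/2  where μ x² ≤ 2 f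
    have hfx : μ * ‖pt t - Pt t‖^2 ≤ 2 * f t := by
      have : 0 ≤ κ/2 * ‖rt t‖^2 := by positivity
      simp only [hf]; nlinarith
    have hfnn : 0 ≤ f t := by positivity
    rw [abs_of_nonneg hfnn]
    nlinarith [sq_nonneg (L - ‖pt t - Pt t‖), mul_nonneg hμ.le (sq_nonneg (L - ‖pt t - Pt t‖))]
  -- apply bootstrap with B := bound + 1
  have key := bootstrap (f := f) (f' := deriv f) (T := T) (K := 1) (ε := ε2) (δ := δ2)
      (B := (δ2 + ε2 * T) * exp (1 * T) + 1)
      hT.le zero_le_one hε2pos hδ2pos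
      (fun t ht => by
        obtain ⟨v, hv, _⟩ := hval t ht
        rw [hv.deriv]; exact hv)
      (fun t ht _ => by
        obtain ⟨v, hv, hvb⟩ := hval t ht
        rw [hv.deriv]; linarith [hvb])
      (by
        have h1 : 0 ≤ ‖rt 0‖ := norm_nonneg _
        have h2 : 0 ≤ Real.sqrt μ * ‖pt 0 - Pt 0‖ := by positivity
        have h3 : ‖rt 0‖ ≤ K * μ := by linarith
        have h4 : Real.sqrt μ * ‖pt 0 - Pt 0‖ ≤ K * μ := by linarith
        have h5 : μ * ‖pt 0 - Pt 0‖^2 ≤ K^2 * μ^2 := by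
          have := mul_self_nonneg (Real.sqrt μ * ‖pt 0 - Pt 0‖)
          have hsq : (Real.sqrt μ * ‖pt 0 - Pt 0‖)^2 ≤ (K*μ)^2 := by
            apply pow_le_pow_left₀ (by positivity) h4
          rw [mul_pow, Real.sq_sqrt hμ.le] at hsq
          nlinarith
        have h6 : ‖rt 0‖^2 ≤ K^2*μ^2 := by nlinarith
        have hfnn : 0 ≤ f 0 := by positivity
        rw [abs_of_nonneg hfnn]
        have e1 : κ/2 * ‖rt 0‖^2 ≤ κ/2 * (K^2*μ^2) :=
          mul_le_mul_of_nonneg_left h6 (by positivity)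
        have e2 : μ/2 * ‖pt 0 - Pt 0‖^2 ≤ K^2*μ^2/2 := by linarith
        simp only [hf, hδ2]
        linarith)
      (by linarith)
  -- conclude
  intro t ht
  have h1 := key t ht
  have h2 : f t ≤ C4 * μ := by
    have hle : (δ2 + ε2 * T) * exp (1 * T) ≤ C4 * μ := by
      rw [one_mul, hC4]
      have hμ2 : μ^2 ≤ μ := by nlinarith
      have hexp : (0:ℝ) < exp T := exp_pos T
      have : δ2 + ε2 * T ≤ ((κ+1)/2 * K^2 + L^2 * T / 2 + 1) * μ := by
        simp only [hδ2, hε2]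
        nlinarith [hκ.le, hK.le, sq_nonneg K, sq_nonneg L, hT.le]
      nlinarith
    exact (le_abs_self _).trans (h1.trans hle)
  have h3 : μ * ‖pt t - Pt t‖^2 ≤ 2 * (C4 * μ) := by
    have : 0 ≤ κ/2 * ‖rt t‖^2 := by positivity
    simp only [hf] at h2; nlinarith
  have h4 : ‖pt t - Pt t‖^2 ≤ 2 * C4 := by
    have h3' : μ * ‖pt t - Pt t‖^2 ≤ μ * (2*C4) := by linarith
    exact le_of_mul_le_mul_left h3' hμ
  have h5 : ‖pt t - Pt t‖ ≤ Real.sqrt (2 * C4) := by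
    rw [show ‖pt t - Pt t‖ = Real.sqrt (‖pt t - Pt t‖^2) by rw [Real.sqrt_sq (norm_nonneg _)]]
    exact Real.sqrt_le_sqrt h4
  calc ‖pt t‖ = ‖(pt t - Pt t) + Pt t‖ := by rw [sub_add_cancel]
    _ ≤ ‖pt t - Pt t‖ + ‖Pt t‖ := norm_add_le _ _
    _ ≤ Real.sqrt (2 * C4) + 1/4 := by
        have := (hFb t ht).2; linarith
    _ ≤ 1 + Real.sqrt (2 * C4) := by linarith


end FA

open FA

/-- Corollary 2: the `O(μ)` FPUT approximation.  If `(R̃,P̃)` solves FPUT with small data,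
`(r̃,p̃)` solves the driven harmonic oscillator `ṙ̃ = p̃ − P̃`, `μṗ̃ = −κr̃` with
`‖r̃(0)‖ + √μ‖p̃(0) − P̃(0)‖ ≤ K_*μ`, and `(R,P,r,p)` solves MiM with initial data `μ`-close
to `(R̃(0),P̃(0),r̃(0),p̃(0))` in `‖·‖_μ`, then the two stay `C_*μ`-close on `[−T_*,T_*]`. -/
theorem fput_approximation_order_mu
    (V : ℝ → ℝ) (κ K T : ℝ) (hκ : 0 < κ) (hK : 0 < K) (hT : 0 < T)
    (hV : ContDiff ℝ (⊤ : ℕ∞) V) (hV0 : V 0 = 0) (hV1 : deriv V 0 = 0)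
    (k : ℝ) (hkdef : k = deriv (deriv V) 0) (hk : 0 < k) :
    ∃ ρ > 0, ∃ μ_ > 0, ∃ C > 0, ∀ μ ∈ Set.Ioc 0 μ_,
      ∀ Rt Pt : ℝ → L2Z, IsFPUTSolution V Rt Pt → ‖Rt 0‖ + ‖Pt 0‖ ≤ ρ →
        ∀ rt pt : ℝ → L2Z, IsDrivenSHOSolution κ μ Pt rt pt →
          ‖rt 0‖ + Real.sqrt μ * ‖pt 0 - Pt 0‖ ≤ K * μ →
          ∀ R P r p : ℝ → L2Z, IsMiMSolution V κ μ R P r p →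
            munorm k κ μ (R 0 - Rt 0) (P 0 - Pt 0) (r 0 - rt 0) (p 0 - pt 0) ≤ μ →
            ∀ t ∈ Set.Icc (-T) T,
              munorm k κ μ (R t - Rt t) (P t - Pt t) (r t - rt t) (p t - pt t) ≤ C * μ := by
  obtain ⟨L, hL1, hlip, hlin⟩ := exists_lip V hV hV1
  have hL0 : (0:ℝ) < L := by linarith
  obtain ⟨M, hM⟩ : ∃ M : ℝ,
      M = 1 + Real.sqrt (2 * (((κ+1)/2 * K^2 + L^2 * T / 2 + 1) * exp T)) := ⟨_, rfl⟩
  have hM1 : 1 ≤ M := by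
    have : 0 ≤ Real.sqrt (2 * (((κ+1)/2 * K^2 + L^2 * T / 2 + 1) * exp T)) := Real.sqrt_nonneg _
    linarith
  have hM0 : 0 < M := by linarith
  obtain ⟨K3', hK3'⟩ : ∃ x : ℝ, x = 2*(k+L)*(2/k+2) + 4*L*M/k + M := ⟨_, rfl⟩
  have hK3'0 : 0 < K3' := by rw [hK3']; positivity
  obtain ⟨ε3', hε3'⟩ : ∃ x : ℝ, x = 2*L*M + κ*M/2 := ⟨_, rfl⟩
  have hε3'0 : 0 < ε3' := by rw [hε3']; positivity
  obtain ⟨K3, hK3⟩ : ∃ x : ℝ, x = 2*K3' := ⟨_, rfl⟩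
  have hK30 : 0 < K3 := by rw [hK3]; linarith
  obtain ⟨ε3, hε3⟩ : ∃ x : ℝ, x = 2*K3'*M^2 + ε3' := ⟨_, rfl⟩
  have hε30 : 0 < ε3 := by rw [hε3]; positivity
  obtain ⟨δ3, hδ3⟩ : ∃ x : ℝ, x = 1 + Real.sqrt 2 * M + M^2/2 := ⟨_, rfl⟩
  have hδ30 : 0 < δ3 := by rw [hδ3]; positivity
  obtain ⟨c2, hc2⟩ : ∃ x : ℝ, x = (δ3 + ε3*T)*exp (K3*T) := ⟨_, rfl⟩
  have hc20 : 0 < c2 := by rw [hc2]; positivity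
  obtain ⟨μ_, hμ_⟩ : ∃ x : ℝ, x = min 1 (Real.sqrt (k/(256*(M^2 + c2 + 1)))) := ⟨_, rfl⟩
  have hμ_0 : 0 < μ_ := by
    rw [hμ_]
    apply lt_min one_pos
    apply Real.sqrt_pos.2
    positivity
  obtain ⟨C, hC⟩ : ∃ x : ℝ, x = Real.sqrt (2*c2 + 2*M^2) + 1 := ⟨_, rfl⟩
  have hC0 : 0 < C := by
    rw [hC]; positivity
  refine ⟨Real.sqrt (exp (-(4 * (1 + L) * T)) / 16), by positivity, μ_, hμ_0, C, hC0, ?_⟩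
  intro μ hμmem Rt Pt hFPUT h0F rt pt hSHO h0S R P r p hMiM h0M
  obtain ⟨hμ0, hμle⟩ := hμmem
  have hμ1 : μ ≤ 1 := hμle.trans (by rw [hμ_]; exact min_le_left _ _)
  have hμsq : μ^2 ≤ k/(256*(M^2 + c2 + 1)) := by
    have h1 : μ ≤ Real.sqrt (k/(256*(M^2 + c2 + 1))) :=
      hμle.trans (by rw [hμ_]; exact min_le_right _ _)
    have h2 : μ^2 ≤ Real.sqrt (k/(256*(M^2 + c2 + 1)))^2 := pow_le_pow_left₀ hμ0.le h1 2
    rwa [Real.sq_sqrt (by positivity)] at h2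
  -- a priori bounds
  have hFb := fput_bound hT hL1 hlin hFPUT h0F
  have hptb : ∀ t ∈ Icc (-T) T, ‖pt t‖ ≤ M :=
    fun t ht => (sho_bound hκ hK hT hL1 hμ0 hμ1 hlin hFPUT hFb hSHO h0S t ht).trans_eq hM.symm
  -- energies
  obtain ⟨EE, hEEdef⟩ : ∃ EE : ℝ → ℝ, EE = fun u =>
      k / 2 * ‖R u - Rt u‖ ^ 2 + 1 / 2 * ‖P u - Pt u‖ ^ 2
      + κ / 2 * ‖r u - rt u‖ ^ 2 + μ / 2 * ‖p u - pt u‖ ^ 2 := ⟨_, rfl⟩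
  obtain ⟨GG, hGGdef⟩ : ∃ GG : ℝ → ℝ, GG = fun u =>
      EE u + μ * ⟪P u - Pt u, pt u⟫ + μ^2 / 2 * ‖pt u‖ ^ 2 := ⟨_, rfl⟩
  have hEEnn : ∀ u, 0 ≤ EE u := by intro u; rw [hEEdef]; positivity
  have hEA : ∀ u, k/2 * ‖R u - Rt u‖^2 ≤ EE u := by
    intro u; rw [hEEdef]
    have z1 : 0 ≤ 1 / 2 * ‖P u - Pt u‖ ^ 2 := by positivity
    have z2 : 0 ≤ κ / 2 * ‖r u - rt u‖ ^ 2 := by positivity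
    have z3 : 0 ≤ μ / 2 * ‖p u - pt u‖ ^ 2 := by positivity
    linarith
  have hEB : ∀ u, 1/2 * ‖P u - Pt u‖^2 ≤ EE u := by
    intro u; rw [hEEdef]
    have z1 : 0 ≤ k / 2 * ‖R u - Rt u‖ ^ 2 := by positivity
    have z2 : 0 ≤ κ / 2 * ‖r u - rt u‖ ^ 2 := by positivity
    have z3 : 0 ≤ μ / 2 * ‖p u - pt u‖ ^ 2 := by positivity
    linarith
  have hEC : ∀ u, κ/2 * ‖r u - rt u‖^2 ≤ EE u := by
    intro u; rw [hEEdef]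
    have z1 : 0 ≤ k / 2 * ‖R u - Rt u‖ ^ 2 := by positivity
    have z2 : 0 ≤ 1 / 2 * ‖P u - Pt u‖ ^ 2 := by positivity
    have z3 : 0 ≤ μ / 2 * ‖p u - pt u‖ ^ 2 := by positivity
    linarith
  -- E ≤ 2|G| + 2 μ² M²
  have hEG : ∀ t ∈ Icc (-T) T, EE t ≤ 2 * |GG t| + 2 * μ^2 * M^2 := by
    intro t ht
    have hql := hEB t
    have hi : |μ * ⟪P t - Pt t, pt t⟫| ≤ μ * (M * ‖P t - Pt t‖) := by
      rw [abs_mul, abs_of_pos hμ0]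
      apply mul_le_mul_of_nonneg_left _ hμ0.le
      calc |⟪P t - Pt t, pt t⟫| ≤ ‖P t - Pt t‖ * ‖pt t‖ := abs_real_inner_le_norm _ _
        _ ≤ M * ‖P t - Pt t‖ := by
            rw [mul_comm]
            exact mul_le_mul_of_nonneg_right (hptb t ht) (norm_nonneg _)
    have hgl : GG t ≥ EE t - μ * (M * ‖P t - Pt t‖) := by
      have h1 : 0 ≤ μ^2/2 * ‖pt t‖^2 := by positivity
      have h2 : μ * ⟪P t - Pt t, pt t⟫ ≥ -(μ * (M * ‖P t - Pt t‖)) := by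
        have := neg_abs_le (μ * ⟪P t - Pt t, pt t⟫); linarith [hi]
      rw [hGGdef]; dsimp only; linarith
    have hamgm : μ * (M * ‖P t - Pt t‖) ≤ μ^2 * M^2 + ‖P t - Pt t‖^2/4 := by
      linarith [sq_nonneg (μ * M - ‖P t - Pt t‖/2)]
    have habs : GG t ≤ |GG t| := le_abs_self _
    linarith
  -- the main derivative estimate
  have hGval : ∀ t ∈ Icc (-T) T, ∃ v, HasDerivAt GG v t ∧
      (|GG t| ≤ k/128 → |v| ≤ K3 * |GG t| + ε3 * μ^2) := by
    intro t ht
    obtain ⟨R', P', r', p', hR, hP, hr, hp, eR, eP, er, ep⟩ := hMiM t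
    obtain ⟨R2', P2', hR2, hP2, eR2, eP2⟩ := hFPUT t
    obtain ⟨r2', p2', hr2, hp2, er2, ep2⟩ := hSHO t
    obtain ⟨D, hD⟩ : ∃ D : L2Z, D = (P' - P2') - κ • (r t) := ⟨_, rfl⟩
    have hdE : HasDerivAt EE
        (k * ⟪R' - R2', R t - Rt t⟫ + 1 * ⟪P' - P2', P t - Pt t⟫
          + κ * ⟪r' - r2', r t - rt t⟫ + μ * ⟪p' - p2', p t - pt t⟫) t := by
      rw [hEEdef]
      exact (((hd_normsq k (hR.sub hR2)).add (hd_normsq 1 (hP.sub hP2))).add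
        (hd_normsq κ (hr.sub hr2))).add (hd_normsq μ (hp.sub hp2))
    have hdG : HasDerivAt GG
        ((k * ⟪R' - R2', R t - Rt t⟫ + 1 * ⟪P' - P2', P t - Pt t⟫
          + κ * ⟪r' - r2', r t - rt t⟫ + μ * ⟪p' - p2', p t - pt t⟫)
          + μ * (⟪P t - Pt t, p2'⟫ + ⟪P' - P2', pt t⟫) + μ^2 * ⟪p2', pt t⟫) t := by
      rw [hGGdef]
      exact (hdE.add (((hP.sub hP2).inner ℝ hp2).const_mul μ)).add (hd_normsq (μ^2) hp2)
    refine ⟨_, hdG, fun hBG => ?_⟩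
    -- identities
    have hid_s : r' - r2' = (p t - pt t) - (P t - Pt t) := by
      apply lp.ext; funext j
      simp only [lp.coeFn_sub, Pi.sub_apply]
      rw [er j, er2 j]; ring
    have hid_q : μ • (p' - p2') = (-κ) • (r t - rt t) := by
      apply lp.ext; funext j
      simp only [lp.coeFn_smul, lp.coeFn_sub, Pi.smul_apply, Pi.sub_apply, smul_eq_mul]
      have h1 := ep j; have h2 := ep2 j
      have h3 : μ * (p' j - p2' j) = μ * p' j - μ * p2' j := by ring
      rw [h3, h1, h2]; ring
    have hid_pt2 : μ • p2' = (-κ) • (rt t) := by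
      apply lp.ext; funext j
      simp only [lp.coeFn_smul, Pi.smul_apply, smul_eq_mul]
      rw [ep2 j]; ring
    have hid_D : ∀ j : ℤ, D j =
        (deriv V (R t j) - deriv V (Rt t j))
          - (deriv V (R t (j-1)) - deriv V (Rt t (j-1))) := by
      intro j
      rw [hD]
      simp only [lp.coeFn_sub, lp.coeFn_smul, Pi.sub_apply, Pi.smul_apply, smul_eq_mul]
      rw [eP j, eP2 j]; ring
    have hPD : P' - P2' = D + κ • r t := by rw [hD]; abel
    -- scalar identities
    have i1 : ⟪P' - P2', P t - Pt t⟫ = ⟪D, P t - Pt t⟫ + κ * ⟪r t, P t - Pt t⟫ := by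
      rw [hPD, inner_add_left, real_inner_smul_left]
    have i2 : ⟪P' - P2', pt t⟫ = ⟪D, pt t⟫ + κ * ⟪r t, pt t⟫ := by
      rw [hPD, inner_add_left, real_inner_smul_left]
    have c1 : ⟪(r t : L2Z), P t - Pt t⟫ = ⟪r t - rt t, P t - Pt t⟫ + ⟪rt t, P t - Pt t⟫ := by
      rw [inner_sub_left]; ring
    have c2' : ⟪(r t : L2Z), pt t⟫ = ⟪r t - rt t, pt t⟫ + ⟪rt t, pt t⟫ := by
      rw [inner_sub_left]; ring
    have i3 : κ * ⟪r' - r2', r t - rt t⟫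
        = κ * ⟪p t - pt t, r t - rt t⟫ - κ * ⟪P t - Pt t, r t - rt t⟫ := by
      rw [hid_s, inner_sub_left]; ring
    have i4 : μ * ⟪p' - p2', p t - pt t⟫ = -(κ * ⟪r t - rt t, p t - pt t⟫) := by
      have h1 : ⟪μ • (p' - p2'), p t - pt t⟫ = μ * ⟪p' - p2', p t - pt t⟫ :=
        real_inner_smul_left _ _ _
      rw [← h1, hid_q, real_inner_smul_left]; ring
    have cm1 : ⟪(p t - pt t : L2Z), r t - rt t⟫ = ⟪r t - rt t, p t - pt t⟫ :=
      real_inner_comm _ _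
    have cm2 : ⟪(P t - Pt t : L2Z), r t - rt t⟫ = ⟪r t - rt t, P t - Pt t⟫ :=
      real_inner_comm _ _
    have i5 : μ * ⟪P t - Pt t, p2'⟫ = -(κ * ⟪P t - Pt t, rt t⟫) := by
      have h1 : ⟪P t - Pt t, μ • p2'⟫ = μ * ⟪P t - Pt t, p2'⟫ :=
        real_inner_smul_right _ _ _
      rw [← h1, hid_pt2, real_inner_smul_right]; ring
    have cm3 : ⟪(P t - Pt t : L2Z), rt t⟫ = ⟪(rt t : L2Z), P t - Pt t⟫ :=
      real_inner_comm _ _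
    have i6 : μ^2 * ⟪p2', pt t⟫ = -(μ * (κ * ⟪(rt t : L2Z), pt t⟫)) := by
      have h1 : ⟪μ • p2', pt t⟫ = μ * ⟪p2', pt t⟫ := real_inner_smul_left _ _ _
      have h2 : μ^2 * ⟪p2', pt t⟫ = μ * ⟪μ • p2', pt t⟫ := by rw [h1]; ring
      rw [h2, hid_pt2, real_inner_smul_left]; ring
    have hveq : (k * ⟪R' - R2', R t - Rt t⟫ + 1 * ⟪P' - P2', P t - Pt t⟫
          + κ * ⟪r' - r2', r t - rt t⟫ + μ * ⟪p' - p2', p t - pt t⟫)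
          + μ * (⟪P t - Pt t, p2'⟫ + ⟪P' - P2', pt t⟫) + μ^2 * ⟪p2', pt t⟫
        = k * ⟪R' - R2', R t - Rt t⟫ + ⟪D, P t - Pt t⟫ + μ * ⟪D, pt t⟫
          + μ * κ * ⟪r t - rt t, pt t⟫ := by
      linear_combination i1 + i3 + i4 + i5 + μ * i2 + i6 + κ * c1 + μ * κ * c2'
        + κ * cm1 - κ * cm2 - κ * cm3
    rw [hveq]
    -- smallness of E under the bootstrap assumption
    have hE32 : EE t ≤ k/32 := by
      have h1 := hEG t ht
      have hX : (0:ℝ) < M^2 + c2 + 1 := by positivity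
      have h2 : μ^2 * (M^2 + c2 + 1) ≤ k/256 := by
        calc μ^2 * (M^2 + c2 + 1) ≤ (k/(256*(M^2+c2+1))) * (M^2+c2+1) :=
              mul_le_mul_of_nonneg_right hμsq hX.le
          _ = k/256 := by field_simp
      have e1 : μ^2*(M^2 + c2 + 1) = μ^2*M^2 + μ^2*c2 + μ^2 := by ring
      rw [e1] at h2
      have h3 : 2*μ^2*M^2 ≤ k/128 := by
        linarith [mul_nonneg (sq_nonneg μ) hc20.le, sq_nonneg μ]
      linarith [hBG]
    have hSt14 : ‖R t - Rt t‖ ≤ 1/4 := by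
      have h1 : k/2 * ‖R t - Rt t‖^2 ≤ k/32 := (hEA t).trans hE32
      have h2 : ‖R t - Rt t‖^2 ≤ 1/16 := by
        calc ‖R t - Rt t‖^2 = (2/k) * (k/2 * ‖R t - Rt t‖^2) := by field_simp
          _ ≤ (2/k) * (k/32) := mul_le_mul_of_nonneg_left h1 (by positivity)
          _ = 1/16 := by field_simp; ring
      have h3 : Real.sqrt (1/16) = 1/4 := by
        rw [show (1:ℝ)/16 = (1/4)^2 by norm_num]
        exact Real.sqrt_sq (by norm_num)
      calc ‖R t - Rt t‖ = Real.sqrt (‖R t - Rt t‖^2) := (Real.sqrt_sq (norm_nonneg _)).symm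
        _ ≤ Real.sqrt (1/16) := Real.sqrt_le_sqrt h2
        _ = 1/4 := h3
    -- pointwise bounds on R, Rt
    have hRtt : ‖Rt t‖ ≤ 1/4 := (hFb t ht).1
    have hmemRt : ∀ j, Rt t j ∈ Icc (-1:ℝ) 1 := by
      intro j
      have := (apply_le (Rt t) j).trans hRtt
      constructor <;> [linarith [neg_abs_le (Rt t j)]; linarith [le_abs_self (Rt t j)]]
    have hmemR : ∀ j, R t j ∈ Icc (-1:ℝ) 1 := by
      intro j
      have h1 : |(R t - Rt t : L2Z) j| ≤ 1/4 := (apply_le _ j).trans hSt14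
      have h2 : (R t - Rt t : L2Z) j = R t j - Rt t j := by
        simp [lp.coeFn_sub]
      rw [h2] at h1
      have h3 := (apply_le (Rt t) j).trans hRtt
      constructor
      · linarith [neg_abs_le (R t j - Rt t j), neg_abs_le (Rt t j),
          le_abs_self (R t j - Rt t j), le_abs_self (Rt t j)]
      · linarith [neg_abs_le (R t j - Rt t j), neg_abs_le (Rt t j),
          le_abs_self (R t j - Rt t j), le_abs_self (Rt t j)]
    -- norm bounds on S' and D
    have hS'n : ‖R' - R2'‖ ≤ 4 * ‖P t - Pt t‖ := by
      have := norm_le_of_abs_le (R' - R2') (P t - Pt t) (P t - Pt t) 1 1 1 0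
        zero_le_one zero_le_one (fun j => by
          have h2 : (R' - R2' : L2Z) j = R' j - R2' j := by simp [lp.coeFn_sub]
          have h3 : (P t - Pt t : L2Z) (j+1) = P t (j+1) - Pt t (j+1) := by simp [lp.coeFn_sub]
          have h4 : (P t - Pt t : L2Z) (j+0) = P t j - Pt t j := by rw [add_zero]; simp [lp.coeFn_sub]
          rw [h2, h3, h4, eR j, eR2 j, one_mul, one_mul]
          have h5 : P t (j + 1) - P t j - (Pt t (j + 1) - Pt t j)
              = (P t (j+1) - Pt t (j+1)) - (P t j - Pt t j) := by ring
          rw [h5]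
          exact abs_sub _ _)
      linarith
    have hDn : ‖D‖ ≤ 4 * (L * ‖R t - Rt t‖) := by
      have := norm_le_of_abs_le D (R t - Rt t) (R t - Rt t) L L 0 (-1)
        hL0.le hL0.le (fun j => by
          rw [hid_D j]
          have h3 : (R t - Rt t : L2Z) (j+0) = R t j - Rt t j := by rw [add_zero]; simp [lp.coeFn_sub]
          have h4 : (R t - Rt t : L2Z) (j+(-1)) = R t (j-1) - Rt t (j-1) := by
            have h5 : j + (-1) = j - 1 := by ring
            rw [h5]; simp [lp.coeFn_sub]
          rw [h3, h4]
          have w1 : |deriv V (R t j) - deriv V (Rt t j)| ≤ L * |R t j - Rt t j| :=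
            hlip _ (hmemR j) _ (hmemRt j)
          have w2 : |deriv V (R t (j-1)) - deriv V (Rt t (j-1))|
              ≤ L * |R t (j-1) - Rt t (j-1)| :=
            hlip _ (hmemR (j-1)) _ (hmemRt (j-1))
          calc |deriv V (R t j) - deriv V (Rt t j)
                - (deriv V (R t (j-1)) - deriv V (Rt t (j-1)))|
              ≤ |deriv V (R t j) - deriv V (Rt t j)|
                + |deriv V (R t (j-1)) - deriv V (Rt t (j-1))| := abs_sub _ _
            _ ≤ L * |R t j - Rt t j| + L * |R t (j-1) - Rt t (j-1)| := by linarith)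
      linarith
    have hptM : ‖pt t‖ ≤ M := hptb t ht
    -- bound each inner product
    have b1 : |k * ⟪R' - R2', R t - Rt t⟫|
        ≤ k * (4 * ‖P t - Pt t‖ * ‖R t - Rt t‖) := by
      rw [abs_mul, abs_of_pos hk]
      apply mul_le_mul_of_nonneg_left _ hk.le
      calc |⟪R' - R2', R t - Rt t⟫| ≤ ‖R' - R2'‖ * ‖R t - Rt t‖ := abs_real_inner_le_norm _ _
        _ ≤ 4 * ‖P t - Pt t‖ * ‖R t - Rt t‖ :=
            mul_le_mul_of_nonneg_right hS'n (norm_nonneg _)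
    have b2 : |⟪D, P t - Pt t⟫| ≤ 4 * (L * ‖R t - Rt t‖) * ‖P t - Pt t‖ := by
      calc |⟪D, P t - Pt t⟫| ≤ ‖D‖ * ‖P t - Pt t‖ := abs_real_inner_le_norm _ _
        _ ≤ 4 * (L * ‖R t - Rt t‖) * ‖P t - Pt t‖ :=
            mul_le_mul_of_nonneg_right hDn (norm_nonneg _)
    have b3 : |μ * ⟪D, pt t⟫| ≤ μ * (4 * (L * ‖R t - Rt t‖) * M) := by
      rw [abs_mul, abs_of_pos hμ0]
      apply mul_le_mul_of_nonneg_left _ hμ0.le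
      calc |⟪D, pt t⟫| ≤ ‖D‖ * ‖pt t‖ := abs_real_inner_le_norm _ _
        _ ≤ 4 * (L * ‖R t - Rt t‖) * M :=
            mul_le_mul hDn hptM (norm_nonneg _) (by positivity)
    have b4 : |μ * κ * ⟪r t - rt t, pt t⟫| ≤ μ * κ * (‖r t - rt t‖ * M) := by
      rw [abs_mul, abs_of_pos (by positivity : (0:ℝ) < μ * κ)]
      apply mul_le_mul_of_nonneg_left _ (by positivity)
      calc |⟪r t - rt t, pt t⟫| ≤ ‖r t - rt t‖ * ‖pt t‖ := abs_real_inner_le_norm _ _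
        _ ≤ ‖r t - rt t‖ * M := mul_le_mul_of_nonneg_left hptM (norm_nonneg _)
    -- triangle inequality
    have ta1 := abs_add_le (k * ⟪R' - R2', R t - Rt t⟫ + ⟪D, P t - Pt t⟫ + μ * ⟪D, pt t⟫)
      (μ * κ * ⟪r t - rt t, pt t⟫)
    have ta2 := abs_add_le (k * ⟪R' - R2', R t - Rt t⟫ + ⟪D, P t - Pt t⟫) (μ * ⟪D, pt t⟫)
    have ta3 := abs_add_le (k * ⟪R' - R2', R t - Rt t⟫) (⟪D, P t - Pt t⟫)
    have htot : |k * ⟪R' - R2', R t - Rt t⟫ + ⟪D, P t - Pt t⟫ + μ * ⟪D, pt t⟫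
        + μ * κ * ⟪r t - rt t, pt t⟫|
        ≤ k * (4 * ‖P t - Pt t‖ * ‖R t - Rt t‖) + 4 * (L * ‖R t - Rt t‖) * ‖P t - Pt t‖
          + μ * (4 * (L * ‖R t - Rt t‖) * M) + μ * κ * (‖r t - rt t‖ * M) := by
      linarith [b1, b2, b3, b4, ta1, ta2, ta3]
    -- energy comparison
    have eA : ‖R t - Rt t‖^2 ≤ (2/k) * EE t := by
      calc ‖R t - Rt t‖^2 = (2/k) * (k/2 * ‖R t - Rt t‖^2) := by field_simp
        _ ≤ (2/k) * EE t := mul_le_mul_of_nonneg_left (hEA t) (by positivity)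
    have eB : ‖P t - Pt t‖^2 ≤ 2 * EE t := by linarith [hEB t]
    have eC : ‖r t - rt t‖^2 ≤ (2/κ) * EE t := by
      calc ‖r t - rt t‖^2 = (2/κ) * (κ/2 * ‖r t - rt t‖^2) := by field_simp
        _ ≤ (2/κ) * EE t := mul_le_mul_of_nonneg_left (hEC t) (by positivity)
    have hAnn : 0 ≤ ‖R t - Rt t‖ := norm_nonneg _
    have hBnn : 0 ≤ ‖P t - Pt t‖ := norm_nonneg _
    have hCnn : 0 ≤ ‖r t - rt t‖ := norm_nonneg _
    have g1 : k * (4 * ‖P t - Pt t‖ * ‖R t - Rt t‖) + 4 * (L * ‖R t - Rt t‖) * ‖P t - Pt t‖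
        ≤ 2*(k+L)*(‖R t - Rt t‖^2 + ‖P t - Pt t‖^2) := by
      linarith [mul_nonneg (add_nonneg hk.le hL0.le)
        (sq_nonneg (‖R t - Rt t‖ - ‖P t - Pt t‖))]
    have g1' : 2*(k+L)*(‖R t - Rt t‖^2 + ‖P t - Pt t‖^2)
        ≤ 2*(k+L)*((2/k) * EE t + 2 * EE t) := by
      apply mul_le_mul_of_nonneg_left _ (by positivity)
      linarith
    have g2 : μ * (4 * (L * ‖R t - Rt t‖) * M) ≤ 2*L*M*(μ^2 + ‖R t - Rt t‖^2) := by
      linarith [mul_nonneg (mul_nonneg hL0.le hM0.le) (sq_nonneg (μ - ‖R t - Rt t‖))]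
    have g2' : 2*L*M*(μ^2 + ‖R t - Rt t‖^2) ≤ 2*L*M*μ^2 + (4*L*M/k) * EE t := by
      have h1 : 2*L*M*‖R t - Rt t‖^2 ≤ 2*L*M*((2/k) * EE t) :=
        mul_le_mul_of_nonneg_left eA (by positivity)
      have h2 : 2*L*M*((2/k) * EE t) = (4*L*M/k) * EE t := by ring
      linarith [h1, h2]
    have g3 : μ * κ * (‖r t - rt t‖ * M) ≤ (κ*M/2)*(μ^2 + ‖r t - rt t‖^2) := by
      linarith [mul_nonneg (mul_nonneg hκ.le hM0.le) (sq_nonneg (μ - ‖r t - rt t‖))]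
    have g3' : (κ*M/2)*(μ^2 + ‖r t - rt t‖^2) ≤ (κ*M/2)*μ^2 + M * EE t := by
      have h1 : (κ*M/2)*‖r t - rt t‖^2 ≤ (κ*M/2)*((2/κ) * EE t) :=
        mul_le_mul_of_nonneg_left eC (by positivity)
      have h2 : (κ*M/2)*((2/κ) * EE t) = M * EE t := by field_simp
      linarith [h1, h2]
    have hEnn := hEEnn t
    have hsum : |k * ⟪R' - R2', R t - Rt t⟫ + ⟪D, P t - Pt t⟫ + μ * ⟪D, pt t⟫
        + μ * κ * ⟪r t - rt t, pt t⟫| ≤ K3' * EE t + ε3' * μ^2 := by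
      have hK3eq : 2*(k+L)*((2/k) * EE t + 2 * EE t) + (4*L*M/k) * EE t + M * EE t
          = K3' * EE t := by rw [hK3']; ring
      have hε3eq : 2*L*M*μ^2 + (κ*M/2)*μ^2 = ε3' * μ^2 := by rw [hε3']; ring
      linarith [htot, g1, g1', g2, g2', g3, g3']
    have hEGt := hEG t ht
    calc |k * ⟪R' - R2', R t - Rt t⟫ + ⟪D, P t - Pt t⟫ + μ * ⟪D, pt t⟫
        + μ * κ * ⟪r t - rt t, pt t⟫| ≤ K3' * EE t + ε3' * μ^2 := hsum
      _ ≤ K3' * (2 * |GG t| + 2 * μ^2 * M^2) + ε3' * μ^2 := by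
          linarith [mul_le_mul_of_nonneg_left hEGt hK3'0.le]
      _ = K3 * |GG t| + ε3 * μ^2 := by rw [hK3, hε3]; ring
  -- initial bound for GG
  have hE0 : EE 0 ≤ μ^2 := by
    have h1 : munorm k κ μ (R 0 - Rt 0) (P 0 - Pt 0) (r 0 - rt 0) (p 0 - pt 0)
        = Real.sqrt (EE 0) := by rw [hEEdef]; simp only [munorm]
    rw [h1] at h0M
    have h2 : Real.sqrt (EE 0) ^ 2 ≤ μ^2 := pow_le_pow_left₀ (Real.sqrt_nonneg _) h0M 2
    rwa [Real.sq_sqrt (hEEnn 0)] at h2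
  have h0mem : (0:ℝ) ∈ Icc (-T) T := ⟨by linarith, hT.le⟩
  have hQ0 : ‖P 0 - Pt 0‖ ≤ Real.sqrt 2 * μ := by
    have h1 := hEB 0
    have h2 : ‖P 0 - Pt 0‖^2 ≤ (Real.sqrt 2 * μ)^2 := by
      rw [mul_pow, Real.sq_sqrt (by norm_num : (0:ℝ) ≤ 2)]
      linarith [hE0]
    calc ‖P 0 - Pt 0‖ = Real.sqrt (‖P 0 - Pt 0‖^2) := (Real.sqrt_sq (norm_nonneg _)).symm
      _ ≤ Real.sqrt ((Real.sqrt 2 * μ)^2) := Real.sqrt_le_sqrt h2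
      _ = Real.sqrt 2 * μ := Real.sqrt_sq (by positivity)
  have hG0 : |GG 0| ≤ δ3 * μ^2 := by
    have hpt0 : ‖pt 0‖ ≤ M := hptb 0 h0mem
    have h1 : |μ * ⟪P 0 - Pt 0, pt 0⟫| ≤ μ * (Real.sqrt 2 * μ * M) := by
      rw [abs_mul, abs_of_pos hμ0]
      apply mul_le_mul_of_nonneg_left _ hμ0.le
      calc |⟪P 0 - Pt 0, pt 0⟫| ≤ ‖P 0 - Pt 0‖ * ‖pt 0‖ := abs_real_inner_le_norm _ _
        _ ≤ Real.sqrt 2 * μ * M := mul_le_mul hQ0 hpt0 (norm_nonneg _) (by positivity)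
    have h2 : μ^2/2 * ‖pt 0‖^2 ≤ μ^2/2 * M^2 := by
      apply mul_le_mul_of_nonneg_left _ (by positivity)
      exact pow_le_pow_left₀ (norm_nonneg _) hpt0 2
    have h3 : |GG 0| ≤ EE 0 + |μ * ⟪P 0 - Pt 0, pt 0⟫| + μ^2/2 * ‖pt 0‖^2 := by
      have h4 := abs_add_le (EE 0 + μ * ⟪P 0 - Pt 0, pt 0⟫) (μ^2/2 * ‖pt 0‖^2)
      have h5 := abs_add_le (EE 0) (μ * ⟪P 0 - Pt 0, pt 0⟫)
      have h6 : |EE 0| = EE 0 := abs_of_nonneg (hEEnn 0)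
      have h7 : |μ^2/2 * ‖pt 0‖^2| = μ^2/2 * ‖pt 0‖^2 := abs_of_nonneg (by positivity)
      have h8 : GG 0 = EE 0 + μ * ⟪P 0 - Pt 0, pt 0⟫ + μ^2/2 * ‖pt 0‖^2 := by
        rw [hGGdef]
      rw [h8]
      linarith
    rw [hδ3]
    have h9 : μ * (Real.sqrt 2 * μ * M) = Real.sqrt 2 * M * μ^2 := by ring
    have h10 : (1 + Real.sqrt 2 * M + M^2/2) * μ^2
        = μ^2 + Real.sqrt 2 * M * μ^2 + μ^2/2 * M^2 := by ring
    linarith [hE0, h1, h2, h3]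
  -- apply the bootstrap
  have heqc2 : (δ3 * μ^2 + ε3 * μ^2 * T) * exp (K3 * T) = c2 * μ^2 := by
    rw [hc2]; ring
  have hABs : (δ3 * μ^2 + ε3 * μ^2 * T) * exp (K3 * T) < k/128 := by
    rw [heqc2]
    have hX : (0:ℝ) < M^2 + c2 + 1 := by positivity
    have h1 : c2 * μ^2 ≤ c2 * (k/(256*(M^2+c2+1))) :=
      mul_le_mul_of_nonneg_left hμsq hc20.le
    have h2 : c2 * (k/(256*(M^2+c2+1))) ≤ k/256 := by
      have e1 : c2 * (k/(256*(M^2+c2+1))) = (c2/(M^2+c2+1)) * (k/256) := by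
        field_simp
      have e2 : c2/(M^2+c2+1) ≤ 1 := by
        rw [div_le_one hX]; linarith [sq_nonneg M]
      rw [e1]
      calc (c2/(M^2+c2+1)) * (k/256) ≤ 1 * (k/256) :=
            mul_le_mul_of_nonneg_right e2 (by positivity)
        _ = k/256 := one_mul _
    have h3 : k/256 < k/128 := by linarith [hk]
    linarith
  have key := bootstrap (f := GG) (f' := deriv GG) (T := T) (K := K3) (ε := ε3 * μ^2)
      (δ := δ3 * μ^2) (B := k/128) hT.le hK30.le (by positivity) (by positivity)
      (fun t ht => by
        obtain ⟨v, hv, _⟩ := hGval t ht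
        rw [hv.deriv]; exact hv)
      (fun t ht hB => by
        obtain ⟨v, hv, hvb⟩ := hGval t ht
        rw [hv.deriv]; exact hvb hB)
      hG0 hABs
  -- conclusion
  intro t ht
  have h1 := key t ht
  rw [heqc2] at h1
  have h3 : EE t ≤ (2*c2 + 2*M^2) * μ^2 := by
    have h2b := hEG t ht
    linarith [h1, h2b]
  have h4 : munorm k κ μ (R t - Rt t) (P t - Pt t) (r t - rt t) (p t - pt t)
      = Real.sqrt (EE t) := by rw [hEEdef]; simp only [munorm]
  rw [h4]
  have h5 : Real.sqrt (EE t) ≤ Real.sqrt ((2*c2 + 2*M^2) * μ^2) := Real.sqrt_le_sqrt h3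
  have h6 : Real.sqrt ((2*c2 + 2*M^2) * μ^2) = Real.sqrt (2*c2 + 2*M^2) * μ := by
    rw [Real.sqrt_mul (by positivity), Real.sqrt_sq hμ0.le]
  rw [h6] at h5
  have h7 : Real.sqrt (2*c2 + 2*M^2) * μ ≤ C * μ := by
    rw [hC]
    have h8 : Real.sqrt (2*c2 + 2*M^2) ≤ Real.sqrt (2*c2 + 2*M^2) + 1 := by linarith
    exact mul_le_mul_of_nonneg_right h8 hμ0.le
  linarith
end
end
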